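/- arXiv:1605.00291 — 7 statements merged into one kernel-verified Lean document; each statement's English description precedes it below -/
import Mathlib

section
/- For all complex q with |q| < 1, the sum over n ≥ 0 of q^{n^2} (-q;q^2)_n / ((q^2;q^2)_n)^2 equals (-q;q^2)_∞ / (q^2;q^2)_∞, where (a;q)_n denotes the q-Pochhammer symbol ∏_{i=0}^{n-1}(1 - a q^i). -/
noncomputable def qPoch (a q : ℂ) (n : ℕ) : ℂ := ∏ i ∈ Finset.range n, (1 - a * q ^ i)

noncomputable def qPochInf (a q : ℂ) : ℂ := ∏' i : ℕ, (1 - a * q ^ i)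

open Filter Topology

lemma perk (q : ℂ) (k m : ℕ) (A B C : ℂ) (hB : B ≠ 0) (hC : C ≠ 0)
    (h1 : (1 : ℂ) - q ^ (2*k+2) ≠ 0) (h2 : (1 : ℂ) - q ^ (2*m+2) ≠ 0) :
    (1 - q^(2*k+2*m+2))^2 * (A / (B^2 * (C * (1 - q^(2*m+2)))))
      - (1 + q^(2*k+2*m+1)) * (A / (B^2 * C))
    = (-(q^(2*m) * (1 - q^(2*k+2))^2 * (q^(2*k+1) * (A * (1 + q^(2*k+1))))
        / ((B * (1 - q^(2*k+2)))^2 * C)))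
      - (-(q^(2*m+2) * (1 - q^(2*k))^2 * A / (B^2 * (C * (1 - q^(2*m+2)))))) := by
  field_simp
  ring

lemma one_sub_ne (z : ℂ) (hz : ‖z‖ < 1) : (1 : ℂ) - z ≠ 0 := by
  intro h
  have : (1:ℂ) = z := by linear_combination h
  rw [← this] at hz; simp at hz

lemma qp_succ (a q : ℂ) (n : ℕ) : qPoch a q (n+1) = qPoch a q n * (1 - a * q ^ n) :=
  Finset.prod_range_succ _ _

lemma Qne (q : ℂ) (hq : ‖q‖ < 1) (n : ℕ) : qPoch (q^2) (q^2) n ≠ 0 := by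
  rw [qPoch]
  apply Finset.prod_ne_zero_iff.mpr
  intro i _
  apply one_sub_ne
  rw [← pow_succ']
  calc ‖(q^2) ^ (i+1)‖ = ‖q‖ ^ (2*(i+1)) := by rw [norm_pow, norm_pow, ← pow_mul]
  _ < 1 := pow_lt_one₀ (norm_nonneg q) hq (by omega)

lemma pow_sub_ne (q : ℂ) (hq : ‖q‖ < 1) (j : ℕ) : (1:ℂ) - q ^ (j+1) ≠ 0 := by
  apply one_sub_ne
  calc ‖q ^ (j+1)‖ = ‖q‖ ^ (j+1) := norm_pow _ _
  _ < 1 := pow_lt_one₀ (norm_nonneg q) hq (by omega)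

lemma Qsucc (q : ℂ) (n : ℕ) :
    qPoch (q^2) (q^2) (n+1) = qPoch (q^2) (q^2) n * (1 - q^(2*n+2)) := by
  rw [qp_succ]
  congr 1
  rw [← pow_mul]
  ring_nf

lemma Psucc (q : ℂ) (n : ℕ) :
    qPoch (-q) (q^2) (n+1) = qPoch (-q) (q^2) n * (1 + q^(2*n+1)) := by
  rw [qp_succ]
  congr 1
  rw [← pow_mul]
  ring

lemma finid (q : ℂ) (hq : ‖q‖ < 1) (N : ℕ) :
    ∑ k ∈ Finset.range (N+1),
        q^(k^2) * qPoch (-q) (q^2) k / ((qPoch (q^2) (q^2) k)^2 * qPoch (q^2) (q^2) (N-k))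
      = qPoch (-q) (q^2) N / (qPoch (q^2) (q^2) N)^2 := by
  set P : ℕ → ℂ := qPoch (-q) (q^2) with hP
  set Q : ℕ → ℂ := qPoch (q^2) (q^2) with hQ
  have hQne : ∀ n, Q n ≠ 0 := Qne q hq
  have hQs : ∀ n, Q (n+1) = Q n * (1 - q^(2*n+2)) := Qsucc q
  have hPs : ∀ n, P (n+1) = P n * (1 + q^(2*n+1)) := Psucc q
  have hQ0 : Q 0 = 1 := Finset.prod_range_zero _
  induction N with
  | zero => simp [hP, hQ, qPoch]
  | succ N ih =>
    set g : ℕ → ℂ := fun j =>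
      -(q^(2*(N+1-j)) * (1 - q^(2*j))^2 * (q^(j^2) * P j) / (Q j^2 * Q (N+1-j))) with hg
    have hside : (1:ℂ) - q^(2*N+2) ≠ 0 := by
      have := pow_sub_ne q hq (2*N+1); rwa [show 2*N+1+1 = 2*N+2 by omega] at this
    have key : ∀ k ∈ Finset.range (N+1),
        (1 - q^(2*N+2))^2 * (q^(k^2) * P k / (Q k^2 * Q (N+1-k)))
        = (1 + q^(2*N+1)) * (q^(k^2) * P k / (Q k^2 * Q (N-k))) + (g (k+1) - g k) := by
      intro k hk
      rw [Finset.mem_range] at hk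
      obtain ⟨m, rfl⟩ : ∃ m, N = k + m := ⟨N - k, by omega⟩
      simp only [hg, show k+m+1-k = m+1 by omega, show k+m-k = m by omega,
        show k+m+1-(k+1) = m by omega]
      rw [hQs m, hQs k, hPs k]
      have hB := hQne k
      have hC := hQne m
      have h1 : (1:ℂ) - q^(2*k+2) ≠ 0 := by
        have := pow_sub_ne q hq (2*k+1); rwa [show 2*k+1+1 = 2*k+2 by omega] at this
      have h2 : (1:ℂ) - q^(2*m+2) ≠ 0 := by
        have := pow_sub_ne q hq (2*m+1); rwa [show 2*m+1+1 = 2*m+2 by omega] at this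
      linear_combination perk q k m (q^(k^2) * P k) (Q k) (Q m) hB hC h1 h2
    apply mul_left_cancel₀ (pow_ne_zero 2 hside)
    rw [Finset.sum_range_succ, mul_add, Finset.mul_sum,
      Finset.sum_congr rfl key, Finset.sum_add_distrib, ← Finset.mul_sum, ih,
      Finset.sum_range_sub g (N+1)]
    have hg0 : g 0 = 0 := by simp [hg]
    have hgN : g (N+1) = -((1 - q^(2*(N+1)))^2 * (q^((N+1)^2) * P (N+1)) / (Q (N+1)^2)) := by
      simp [hg, hQ0]
    rw [hg0, hgN, Nat.sub_self, hQ0, hQs N, hPs N]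
    have hQN := hQne N
    field_simp
    ring

lemma hasProd_qPochInf (a w : ℂ) (ha : ‖a‖ < 1) (hw : ‖w‖ < 1) :
    HasProd (fun i : ℕ => 1 - a * w ^ i) (qPochInf a w) ∧ qPochInf a w ≠ 0 := by
  have hfn : ∀ n : ℕ, (1:ℂ) - a * w ^ n ≠ 0 := by
    intro n
    apply one_sub_ne
    rw [norm_mul, norm_pow]
    calc ‖a‖ * ‖w‖^n ≤ ‖a‖ * 1 := by
          gcongr
          exact pow_le_one₀ (norm_nonneg w) hw.le
    _ < 1 := by simpa using ha
  have hlog : Summable (fun n : ℕ => Complex.log (1 - a * w^n)) := by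
    have h0 : Tendsto (fun n : ℕ => ‖a‖ * ‖w‖^n) atTop (𝓝 0) := by
      simpa using (tendsto_pow_atTop_nhds_zero_of_lt_one (norm_nonneg w) hw).const_mul ‖a‖
    have hev : ∀ᶠ n in atTop, ‖a‖ * ‖w‖^n ≤ 1/2 := h0.eventually_le_const (by norm_num)
    apply Summable.of_norm_bounded_eventually_nat (g := fun n => 3/2 * (‖a‖ * ‖w‖^n))
    · exact ((summable_geometric_of_lt_one (norm_nonneg w) hw).mul_left ‖a‖).mul_left (3/2)
    · filter_upwards [hev] with n hn
      have he : (1:ℂ) - a * w^n = 1 + (-(a * w^n)) := by ring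
      rw [he]
      have hb := Complex.norm_log_one_add_half_le_self (z := -(a * w^n))
        (by rwa [norm_neg, norm_mul, norm_pow])
      rwa [norm_neg, norm_mul, norm_pow] at hb
  have hfun : (fun n : ℕ => 1 - a * w^n)
      = fun n => Complex.exp (Complex.log (1 - a * w^n)) :=
    funext fun n => (Complex.exp_log (hfn n)).symm
  have hprod : HasProd (fun n : ℕ => 1 - a * w^n)
      (Complex.exp (∑' n, Complex.log (1 - a * w^n))) := by
    rw [hfun]
    exact hlog.hasSum.cexp
  have hm : Multipliable (fun i : ℕ => 1 - a * w^i) := ⟨_, hprod⟩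
  refine ⟨hm.hasProd, ?_⟩
  rw [qPochInf, hprod.tprod_eq]
  exact Complex.exp_ne_zero _

theorem stmt_0 (q : ℂ) (hq : ‖q‖ < 1) :
    ∑' n : ℕ, q ^ (n ^ 2) * qPoch (-q) (q ^ 2) n / (qPoch (q ^ 2) (q ^ 2) n) ^ 2
      = qPochInf (-q) (q ^ 2) / qPochInf (q ^ 2) (q ^ 2) := by
  have hq2 : ‖q^2‖ < 1 := by
    rw [norm_pow]
    exact pow_lt_one₀ (norm_nonneg q) hq (by omega)
  have hnq : ‖-q‖ < 1 := by rwa [norm_neg]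
  obtain ⟨hPprod, hPIne⟩ := hasProd_qPochInf (-q) (q^2) hnq hq2
  obtain ⟨hQprod, hQIne⟩ := hasProd_qPochInf (q^2) (q^2) hq2 hq2
  have hQne : ∀ n, qPoch (q^2) (q^2) n ≠ 0 := Qne q hq
  have hPtend : Tendsto (fun N => qPoch (-q) (q^2) N) atTop (𝓝 (qPochInf (-q) (q^2))) :=
    hPprod.tendsto_prod_nat
  have hQtend : Tendsto (fun N => qPoch (q^2) (q^2) N) atTop (𝓝 (qPochInf (q^2) (q^2))) :=
    hQprod.tendsto_prod_nat
  -- uniform lower bound on ‖Q m‖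
  obtain ⟨δ, hδ0, hδ⟩ : ∃ δ : ℝ, 0 < δ ∧ ∀ m, δ ≤ ‖qPoch (q^2) (q^2) m‖ := by
    have hpos : 0 < ‖qPochInf (q^2) (q^2)‖ := norm_pos_iff.mpr hQIne
    have h2 : ∀ᶠ m in atTop, ‖qPochInf (q^2) (q^2)‖/2 ≤ ‖qPoch (q^2) (q^2) m‖ :=
      hQtend.norm.eventually_const_le (by linarith)
    obtain ⟨N₀, hN₀⟩ := eventually_atTop.mp h2
    refine ⟨min (‖qPochInf (q^2) (q^2)‖/2)
      ((Finset.range (N₀+1)).inf' ⟨0, by simp⟩ fun m => ‖qPoch (q^2) (q^2) m‖), ?_, ?_⟩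
    · apply lt_min (by linarith)
      refine (Finset.lt_inf'_iff _).2 ?_
      intro m _
      exact norm_pos_iff.mpr (hQne m)
    · intro m
      rcases le_or_gt m N₀ with h | h
      · exact le_trans (min_le_right _ _)
          (Finset.inf'_le _ (Finset.mem_range.mpr (by omega)))
      · exact le_trans (min_le_left _ _) (hN₀ m h.le)
  have hPbd : ∀ k, ‖qPoch (-q) (q^2) k‖ ≤ 2^k := by
    intro k
    induction k with
    | zero => simp [qPoch]
    | succ k ih =>
      rw [Psucc]
      calc ‖qPoch (-q) (q^2) k * (1 + q^(2*k+1))‖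
          = ‖qPoch (-q) (q^2) k‖ * ‖1 + q^(2*k+1)‖ := norm_mul _ _
        _ ≤ 2^k * 2 := by
            apply mul_le_mul ih ?_ (norm_nonneg _) (by positivity)
            calc ‖(1:ℂ) + q^(2*k+1)‖ ≤ ‖(1:ℂ)‖ + ‖q^(2*k+1)‖ := norm_add_le _ _
              _ ≤ 1 + 1 := by
                  rw [norm_one, norm_pow]
                  have : ‖q‖^(2*k+1) ≤ 1 := pow_le_one₀ (norm_nonneg q) hq.le
                  linarith
              _ = 2 := by norm_num
        _ = 2^(k+1) := by ring
  set B : ℕ → ℝ := fun k => δ⁻¹^3 * (2*‖q‖^k)^k with hB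
  have hBsum : Summable B := by
    apply Summable.mul_left
    apply Summable.of_norm_bounded_eventually_nat (g := fun k => (1/2:ℝ)^k)
      (summable_geometric_of_lt_one (by norm_num) (by norm_num))
    have hev : ∀ᶠ k in atTop, ‖q‖^k ≤ 1/4 :=
      (tendsto_pow_atTop_nhds_zero_of_lt_one (norm_nonneg q) hq).eventually_le_const
        (by norm_num)
    filter_upwards [hev] with k hk
    rw [Real.norm_eq_abs, abs_of_nonneg (by positivity)]
    exact pow_le_pow_left₀ (by positivity) (by linarith) k
  set F : ℕ → ℕ → ℂ := fun N k =>
    if k ≤ N then q^(k^2) * qPoch (-q) (q^2) k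
      / ((qPoch (q^2) (q^2) k)^2 * qPoch (q^2) (q^2) (N-k)) else 0 with hF
  have hFsum : ∀ N, ∑' k, F N k
      = qPoch (-q) (q^2) N / (qPoch (q^2) (q^2) N)^2 := by
    intro N
    rw [tsum_eq_sum (s := Finset.range (N+1))
      (by
        intro b hb
        simp only [hF]
        rw [if_neg]
        rw [Finset.mem_range] at hb
        omega)]
    rw [← finid q hq N]
    apply Finset.sum_congr rfl
    intro k hk
    rw [Finset.mem_range] at hk
    simp only [hF]
    rw [if_pos (by omega)]
  have hpow2 : (qPochInf (q^2) (q^2))^2 ≠ 0 := pow_ne_zero 2 hQIne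
  have h_ab : ∀ k, Tendsto (fun N => F N k) atTop
      (𝓝 (q^(k^2) * qPoch (-q) (q^2) k / ((qPoch (q^2) (q^2) k)^2 * qPochInf (q^2) (q^2)))) := by
    intro k
    have h1 : Tendsto (fun N => qPoch (q^2) (q^2) (N-k)) atTop (𝓝 (qPochInf (q^2) (q^2))) :=
      hQtend.comp (tendsto_sub_atTop_nat k)
    have h2 : Tendsto (fun N => q^(k^2) * qPoch (-q) (q^2) k
        / ((qPoch (q^2) (q^2) k)^2 * qPoch (q^2) (q^2) (N-k))) atTop
        (𝓝 (q^(k^2) * qPoch (-q) (q^2) k / ((qPoch (q^2) (q^2) k)^2 * qPochInf (q^2) (q^2)))) :=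
      Tendsto.div tendsto_const_nhds (h1.const_mul _)
        (mul_ne_zero (pow_ne_zero 2 (hQne k)) hQIne)
    apply Tendsto.congr' ?_ h2
    filter_upwards [eventually_ge_atTop k] with N hN
    simp only [hF]
    rw [if_pos hN]
  have h_bd : ∀ᶠ N in atTop, ∀ k, ‖F N k‖ ≤ B k := by
    apply Eventually.of_forall
    intro N k
    simp only [hF, hB]
    by_cases h : k ≤ N
    · rw [if_pos h]
      simp only [norm_div, norm_mul, norm_pow]
      have hden : δ^3 ≤ ‖qPoch (q^2) (q^2) k‖^2 * ‖qPoch (q^2) (q^2) (N-k)‖ := by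
        calc δ^3 = δ^2 * δ := by ring
        _ ≤ ‖qPoch (q^2) (q^2) k‖^2 * ‖qPoch (q^2) (q^2) (N-k)‖ := by
            gcongr <;> first
              | exact hδ0.le
              | exact hδ k
              | exact hδ (N-k)
      have hnum : ‖q‖^(k^2) * ‖qPoch (-q) (q^2) k‖ ≤ ‖q‖^(k^2) * 2^k := by
        gcongr
        exact hPbd k
      calc ‖q‖^(k^2) * ‖qPoch (-q) (q^2) k‖
            / (‖qPoch (q^2) (q^2) k‖^2 * ‖qPoch (q^2) (q^2) (N-k)‖)
          ≤ (‖q‖^(k^2) * 2^k) / δ^3 :=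
            div_le_div₀ (by positivity) hnum (by positivity) hden
        _ = δ⁻¹^3 * (2*‖q‖^k)^k := by
            rw [mul_pow, ← pow_mul, ← pow_two, inv_pow]
            ring
    · rw [if_neg h]
      simp only [norm_zero]
      positivity
  have hT := tendsto_tsum_of_dominated_convergence hBsum h_ab h_bd
  have h2 : Tendsto (fun N => qPoch (-q) (q^2) N / (qPoch (q^2) (q^2) N)^2) atTop
      (𝓝 (qPochInf (-q) (q^2) / (qPochInf (q^2) (q^2))^2)) :=
    Tendsto.div hPtend (hQtend.pow 2) hpow2
  have hEq : ∑' k, q^(k^2) * qPoch (-q) (q^2) k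
      / ((qPoch (q^2) (q^2) k)^2 * qPochInf (q^2) (q^2))
      = qPochInf (-q) (q^2) / (qPochInf (q^2) (q^2))^2 :=
    tendsto_nhds_unique (hT.congr hFsum) h2
  have hL : (∑' k : ℕ, q^(k^2) * qPoch (-q) (q^2) k / (qPoch (q^2) (q^2) k)^2)
      / qPochInf (q^2) (q^2) = qPochInf (-q) (q^2) / (qPochInf (q^2) (q^2))^2 := by
    rw [← tsum_div_const, ← hEq]
    congr 1
    funext k
    rw [div_div]
  rw [div_eq_div_iff hQIne hpow2] at hL
  rw [eq_div_iff hQIne]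
  apply mul_right_cancel₀ hQIne
  linear_combination hL
end

section
/- For all complex q with |q| < 1, the sum over n ≥ 0 of q^{n^2+2n} (-q;q^2)_n / ((q^2;q^2)_n)^2 equals ((-q;q^2)_∞ / (q^2;q^2)_∞) times the sum over n ≥ 0 of (-1)^n q^{n^2+n} / (-q;q^2)_{n+1}. -/
open Finset Filter Topology
set_option linter.unusedSectionVars false
set_option linter.unusedVariables false





lemma qPoch_zero (a q : ℂ) : qPoch a q 0 = 1 := by simp [qPoch]

lemma qPoch_succ (a q : ℂ) (n : ℕ) :
    qPoch a q (n + 1) = qPoch a q n * (1 - a * q ^ n) := Finset.prod_range_succ _ _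

-- real ineq : for 0 ≤ x < 1, exp(-(x/(1-x))) ≤ 1 - x
lemma exp_le_one_sub {x : ℝ} (_h0 : 0 ≤ x) (h1 : x < 1) :
    Real.exp (-(x / (1 - x))) ≤ 1 - x := by
  have hx : (0:ℝ) < 1 - x := by linarith
  have h := Real.add_one_le_exp (x / (1 - x))
  have h2 : 1 / (1 - x) ≤ Real.exp (x / (1 - x)) := by
    have : 1 / (1 - x) = x / (1 - x) + 1 := by field_simp; ring
    linarith
  rw [Real.exp_neg]
  rw [inv_le_comm₀ (Real.exp_pos _) (by linarith)] at *
  · calc (1 - x)⁻¹ = 1 / (1-x) := by rw [one_div]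
      _ ≤ Real.exp (x / (1-x)) := h2

-- upper bound on partial products
lemma qPoch_norm_le {a q : ℂ} (hq : ‖q‖ < 1) (n : ℕ) :
    ‖qPoch a q n‖ ≤ Real.exp (‖a‖ / (1 - ‖q‖)) := by
  have hq0 : (0:ℝ) < 1 - ‖q‖ := by linarith
  calc ‖qPoch a q n‖ ≤ ∏ i ∈ range n, ‖1 - a * q ^ i‖ := norm_prod_le _ _
    _ ≤ ∏ i ∈ range n, Real.exp (‖a‖ * ‖q‖ ^ i) := by
        apply Finset.prod_le_prod (fun i _ => norm_nonneg _)
        intro i _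
        calc ‖1 - a * q ^ i‖ ≤ ‖(1:ℂ)‖ + ‖a * q ^ i‖ := norm_sub_le _ _
          _ = 1 + ‖a‖ * ‖q‖ ^ i := by simp [norm_mul, norm_pow]
          _ ≤ Real.exp (‖a‖ * ‖q‖ ^ i) := by
              have := Real.add_one_le_exp (‖a‖ * ‖q‖ ^ i); linarith
    _ = Real.exp (∑ i ∈ range n, ‖a‖ * ‖q‖ ^ i) := by rw [Real.exp_sum]
    _ ≤ Real.exp (‖a‖ / (1 - ‖q‖)) := by
        apply Real.exp_le_exp.mpr
        rw [← Finset.mul_sum]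
        rw [div_eq_mul_inv]
        apply mul_le_mul_of_nonneg_left _ (norm_nonneg a)
        calc ∑ i ∈ range n, ‖q‖ ^ i ≤ ∑' i : ℕ, ‖q‖ ^ i :=
              Summable.sum_le_tsum _ (fun i _ => by positivity)
                (summable_geometric_of_lt_one (norm_nonneg q) hq)
          _ = (1 - ‖q‖)⁻¹ := tsum_geometric_of_lt_one (norm_nonneg q) hq

-- lower bound on partial products
lemma qPoch_norm_ge {a q : ℂ} (ha : ‖a‖ < 1) (hq : ‖q‖ < 1) (n : ℕ) :
    Real.exp (-(‖a‖ / ((1 - ‖a‖) * (1 - ‖q‖)))) ≤ ‖qPoch a q n‖ := by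
  have ha0 : (0:ℝ) < 1 - ‖a‖ := by linarith
  have hq0 : (0:ℝ) < 1 - ‖q‖ := by linarith
  have key : ∀ i : ℕ, Real.exp (-(‖a‖ * ‖q‖ ^ i / (1 - ‖a‖))) ≤ ‖1 - a * q ^ i‖ := by
    intro i
    have hqi : ‖q‖ ^ i ≤ 1 := pow_le_one₀ (norm_nonneg q) hq.le
    have hx0 : 0 ≤ ‖a‖ * ‖q‖ ^ i := by positivity
    have hx1 : ‖a‖ * ‖q‖ ^ i < 1 := by
      calc ‖a‖ * ‖q‖ ^ i ≤ ‖a‖ * 1 := by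
            apply mul_le_mul_of_nonneg_left hqi (norm_nonneg a)
        _ < 1 := by linarith
    have hlow : 1 - ‖a‖ * ‖q‖ ^ i ≤ ‖1 - a * q ^ i‖ := by
      have := norm_sub_norm_le (1:ℂ) (a * q ^ i)
      simp only [norm_one, norm_mul, norm_pow] at this ⊢
      linarith
    have hxa : ‖a‖ * ‖q‖ ^ i ≤ ‖a‖ := by
      have := mul_le_mul_of_nonneg_left hqi (norm_nonneg a); linarith
    refine le_trans (le_trans ?_ (exp_le_one_sub hx0 hx1)) hlow
    apply Real.exp_le_exp.mpr
    rw [neg_le_neg_iff]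
    apply div_le_div_of_nonneg_left hx0 ha0 (by linarith)
  calc Real.exp (-(‖a‖ / ((1 - ‖a‖) * (1 - ‖q‖))))
      ≤ Real.exp (-(∑ i ∈ range n, ‖a‖ * ‖q‖ ^ i / (1 - ‖a‖))) := by
        apply Real.exp_le_exp.mpr
        rw [neg_le_neg_iff]
        have : ∑ i ∈ range n, ‖a‖ * ‖q‖ ^ i / (1 - ‖a‖)
            = (‖a‖ / (1 - ‖a‖)) * ∑ i ∈ range n, ‖q‖ ^ i := by
          rw [Finset.mul_sum]; apply Finset.sum_congr rfl; intro i _; ring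
        rw [this]
        have hsum : ∑ i ∈ range n, ‖q‖ ^ i ≤ (1 - ‖q‖)⁻¹ := by
          calc ∑ i ∈ range n, ‖q‖ ^ i ≤ ∑' i : ℕ, ‖q‖ ^ i :=
                Summable.sum_le_tsum _ (fun i _ => by positivity)
                  (summable_geometric_of_lt_one (norm_nonneg q) hq)
            _ = (1 - ‖q‖)⁻¹ := tsum_geometric_of_lt_one (norm_nonneg q) hq
        calc (‖a‖ / (1 - ‖a‖)) * ∑ i ∈ range n, ‖q‖ ^ i
            ≤ (‖a‖ / (1 - ‖a‖)) * (1 - ‖q‖)⁻¹ := by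
              apply mul_le_mul_of_nonneg_left hsum (by positivity)
          _ = ‖a‖ / ((1 - ‖a‖) * (1 - ‖q‖)) := by field_simp
    _ = ∏ i ∈ range n, Real.exp (-(‖a‖ * ‖q‖ ^ i / (1 - ‖a‖))) := by
        rw [← Real.exp_sum, ← Finset.sum_neg_distrib]
    _ ≤ ∏ i ∈ range n, ‖1 - a * q ^ i‖ := by
        apply Finset.prod_le_prod (fun i _ => (Real.exp_pos _).le) (fun i _ => key i)
    _ = ‖qPoch a q n‖ := (norm_prod _ _).symm

lemma qPoch_ne_zero {a q : ℂ} (ha : ‖a‖ < 1) (hq : ‖q‖ < 1) (n : ℕ) :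
    qPoch a q n ≠ 0 := by
  intro h
  have := qPoch_norm_ge ha hq n
  rw [h, norm_zero] at this
  exact absurd this (not_le.mpr (Real.exp_pos _))
section
variable {a q : ℂ}


lemma factor_ne_zero (ha : ‖a‖ < 1) (hq : ‖q‖ < 1) (i : ℕ) : 1 - a * q ^ i ≠ 0 := by
  intro h
  have h1 : ‖a * q ^ i‖ < 1 := by
    rw [norm_mul, norm_pow]
    calc ‖a‖ * ‖q‖ ^ i ≤ ‖a‖ * 1 :=
          mul_le_mul_of_nonneg_left (pow_le_one₀ (norm_nonneg q) hq.le) (norm_nonneg a)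
      _ < 1 := by linarith
  have : a * q ^ i = 1 := by linear_combination -h
  rw [this] at h1; simp at h1

lemma summable_log (ha : ‖a‖ < 1) (hq : ‖q‖ < 1) :
    Summable (fun i : ℕ => Complex.log (1 - a * q ^ i)) := by
  apply Summable.of_norm_bounded_eventually_nat (g := fun i => 3/2 * (‖a‖ * ‖q‖ ^ i))
  · apply Summable.mul_left
    exact (summable_geometric_of_lt_one (norm_nonneg q) hq).mul_left _
  · have hten : Tendsto (fun i : ℕ => ‖a‖ * ‖q‖ ^ i) atTop (𝓝 0) := by
      simpa using (tendsto_pow_atTop_nhds_zero_of_lt_one (norm_nonneg q) hq).const_mul ‖a‖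
    filter_upwards [hten.eventually_le_const (by norm_num : (0:ℝ) < 1/2)] with i hi
    have h2 : ‖-(a * q ^ i)‖ ≤ 1/2 := by
      rw [norm_neg, norm_mul, norm_pow]; exact hi
    have := Complex.norm_log_one_add_half_le_self h2
    rw [show (1 : ℂ) + -(a * q ^ i) = 1 - a * q ^ i by ring] at this
    calc ‖Complex.log (1 - a * q ^ i)‖ ≤ 3/2 * ‖-(a * q ^ i)‖ := this
      _ = 3/2 * (‖a‖ * ‖q‖ ^ i) := by rw [norm_neg, norm_mul, norm_pow]

lemma multipliable_qp (ha : ‖a‖ < 1) (hq : ‖q‖ < 1) :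
    Multipliable (fun i : ℕ => 1 - a * q ^ i) := by
  have := Complex.multipliable_of_summable_log (summable_log ha hq)
  exact this

lemma qPochInf_ne_zero (ha : ‖a‖ < 1) (hq : ‖q‖ < 1) : qPochInf a q ≠ 0 := by
  have := Complex.cexp_tsum_eq_tprod (fun i => factor_ne_zero ha hq i) (summable_log ha hq)
  rw [qPochInf, ← this]
  exact Complex.exp_ne_zero _

lemma qPochInf_eq_exp (ha : ‖a‖ < 1) (hq : ‖q‖ < 1) :
    qPochInf a q = Complex.exp (∑' i : ℕ, Complex.log (1 - a * q ^ i)) := by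
  have := Complex.cexp_tsum_eq_tprod (fun i => factor_ne_zero ha hq i) (summable_log ha hq)
  rw [qPochInf, ← this]

lemma norm_mul_pow_lt (ha : ‖a‖ < 1) (hq : ‖q‖ < 1) (k : ℕ) : ‖a * q ^ k‖ < 1 := by
  rw [norm_mul, norm_pow]
  calc ‖a‖ * ‖q‖ ^ k ≤ ‖a‖ * 1 :=
        mul_le_mul_of_nonneg_left (pow_le_one₀ (norm_nonneg q) hq.le) (norm_nonneg a)
    _ < 1 := by linarith

lemma qPochInf_split (ha : ‖a‖ < 1) (hq : ‖q‖ < 1) (k : ℕ) :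
    qPochInf a q = qPoch a q k * qPochInf (a * q ^ k) q := by
  have hak : ‖a * q ^ k‖ < 1 := norm_mul_pow_lt ha hq k
  have hshift : ∀ i : ℕ, 1 - a * q ^ (i + k) = 1 - (a * q ^ k) * q ^ i := by
    intro i; rw [pow_add]; ring
  rw [qPochInf_eq_exp ha hq, qPochInf_eq_exp hak hq,
    ← Summable.sum_add_tsum_nat_add k (summable_log ha hq), Complex.exp_add]
  congr 1
  · rw [Complex.exp_sum, qPoch]
    apply Finset.prod_congr rfl
    intro i _
    exact Complex.exp_log (factor_ne_zero ha hq i)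
  · congr 1
    apply tsum_congr
    intro i
    rw [hshift i]

lemma qPoch_tendsto (ha : ‖a‖ < 1) (hq : ‖q‖ < 1) :
    Tendsto (fun n => qPoch a q n) atTop (𝓝 (qPochInf a q)) :=
  (multipliable_qp ha hq).hasProd.tendsto_prod_nat

end
def tri : ℕ → ℕ
  | 0 => 0
  | n + 1 => tri n + n

noncomputable def qb (Q : ℂ) (N m : ℕ) : ℂ :=
  if m ≤ N then qPoch Q Q N / (qPoch Q Q m * qPoch Q Q (N - m)) else 0




section
variable {Q : ℂ} (hQ : ‖Q‖ < 1)
include hQ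

lemma qb_eq {N m : ℕ} (h : m ≤ N) :
    qb Q N m = qPoch Q Q N / (qPoch Q Q m * qPoch Q Q (N - m)) := if_pos h

lemma qb_of_lt {N m : ℕ} (h : N < m) : qb Q N m = 0 := if_neg (by omega)

lemma qb_zero (N : ℕ) : qb Q N 0 = 1 := by
  rw [qb_eq hQ (Nat.zero_le N), qPoch_zero, Nat.sub_zero, one_mul,
    div_self (qPoch_ne_zero hQ hQ N)]

lemma qb_self (N : ℕ) : qb Q N N = 1 := by
  rw [qb_eq hQ le_rfl, Nat.sub_self, qPoch_zero, mul_one,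
    div_self (qPoch_ne_zero hQ hQ N)]

lemma pascal2 (N m : ℕ) :
    qb Q (N + 1) (m + 1) = Q ^ (m + 1) * qb Q N (m + 1) + qb Q N m := by
  rcases lt_trichotomy N m with h | rfl | h
  · rw [qb_of_lt hQ (by omega), qb_of_lt hQ (by omega), qb_of_lt hQ h]
    ring
  · rw [qb_self hQ, qb_self hQ, qb_of_lt hQ (by omega)]
    ring
  · obtain ⟨j, rfl⟩ : ∃ j, N = m + 1 + j := ⟨N - m - 1, by omega⟩
    rw [qb_eq hQ (by omega), qb_eq hQ (by omega), qb_eq hQ (by omega)]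
    have e1 : m + 1 + j + 1 - (m + 1) = j + 1 := by omega
    have e2 : m + 1 + j - (m + 1) = j := by omega
    have e3 : m + 1 + j - m = j + 1 := by omega
    rw [e1, e2, e3]
    rw [qPoch_succ Q Q (m + 1 + j), qPoch_succ Q Q j, qPoch_succ Q Q m]
    have hm := qPoch_ne_zero hQ hQ m
    have hj := qPoch_ne_zero hQ hQ j
    have hfm := factor_ne_zero hQ hQ m
    have hfj := factor_ne_zero hQ hQ j
    field_simp
    ring

lemma pascal1 {N m : ℕ} (h : m ≤ N) :
    qb Q (N + 1) (m + 1) = qb Q N (m + 1) + Q ^ (N - m) * qb Q N m := by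
  rcases eq_or_lt_of_le h with rfl | h
  · rw [qb_self hQ, qb_self hQ, qb_of_lt hQ (by omega), Nat.sub_self]
    ring
  · obtain ⟨j, rfl⟩ : ∃ j, N = m + 1 + j := ⟨N - m - 1, by omega⟩
    rw [qb_eq hQ (by omega), qb_eq hQ (by omega), qb_eq hQ (by omega)]
    have e1 : m + 1 + j + 1 - (m + 1) = j + 1 := by omega
    have e2 : m + 1 + j - (m + 1) = j := by omega
    have e3 : m + 1 + j - m = j + 1 := by omega
    rw [e1, e2, e3]
    rw [qPoch_succ Q Q (m + 1 + j), qPoch_succ Q Q j, qPoch_succ Q Q m]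
    have hm := qPoch_ne_zero hQ hQ m
    have hj := qPoch_ne_zero hQ hQ j
    have hfm := factor_ne_zero hQ hQ m
    have hfj := factor_ne_zero hQ hQ j
    field_simp
    ring

theorem qpoch_eq_sum (z : ℂ) (N : ℕ) :
    qPoch z Q N = ∑ m ∈ range (N + 1), (-1) ^ m * Q ^ tri m * qb Q N m * z ^ m := by
  induction N with
  | zero => simp [qPoch_zero, tri, qb_zero hQ]
  | succ N ih =>
    have hsplit : ∀ m ∈ range (N + 1),
        (-1) ^ (m+1) * Q ^ tri (m+1) * qb Q (N+1) (m+1) * z ^ (m+1)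
        = (-1) ^ (m+1) * Q ^ tri (m+1) * qb Q N (m+1) * z ^ (m+1)
          + (-(z * Q ^ N)) * ((-1) ^ m * Q ^ tri m * qb Q N m * z ^ m) := by
      intro m hm
      rw [Finset.mem_range] at hm
      have hmN : m ≤ N := by omega
      rw [pascal1 hQ hmN]
      have etri : tri (m + 1) = tri m + m := rfl
      have epow : Q ^ tri (m + 1) * Q ^ (N - m) = Q ^ N * Q ^ tri m := by
        rw [← pow_add, ← pow_add, etri]
        congr 1
        omega
      rw [etri]
      calc (-1)^(m+1) * Q^(tri m + m) * (qb Q N (m+1) + Q^(N-m) * qb Q N m) * z^(m+1)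
          = (-1)^(m+1) * Q^(tri m + m) * qb Q N (m+1) * z^(m+1)
            + (-1)^(m+1) * (Q^(tri m + m) * Q^(N-m)) * qb Q N m * z^(m+1) := by ring
        _ = _ := by
            rw [show Q^(tri m + m) * Q^(N-m) = Q^N * Q^(tri m) by
              rw [← pow_add, ← pow_add]; congr 1; omega]
            rw [etri] at *
            ring
    rw [qPoch_succ, ih]
    rw [Finset.sum_range_succ' (fun m => (-1) ^ m * Q ^ tri m * qb Q (N+1) m * z ^ m) (N+1)]
    rw [Finset.sum_congr rfl hsplit]
    rw [Finset.sum_add_distrib]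
    have h1 : ∑ m ∈ range (N + 1), (-1)^(m+1) * Q^(tri (m+1)) * qb Q N (m+1) * z^(m+1)
        + (-1)^0 * Q^(tri 0) * qb Q (N+1) 0 * z^0
        = ∑ m ∈ range (N + 1), (-1)^m * Q^(tri m) * qb Q N m * z^m := by
      rw [qb_zero hQ]
      have : ∑ m ∈ range (N + 2), (-1)^m * Q^(tri m) * qb Q N m * z^m
          = ∑ m ∈ range (N + 1), (-1)^m * Q^(tri m) * qb Q N m * z^m := by
        rw [Finset.sum_range_succ, qb_of_lt hQ (by omega)]
        simp
      rw [← this, Finset.sum_range_succ' (fun m => (-1)^m * Q^(tri m) * qb Q N m * z^m) (N+1)]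
      norm_num [qb_zero hQ, tri]
    have h2 : ∑ m ∈ range (N + 1), (-(z * Q ^ N)) * ((-1)^m * Q^(tri m) * qb Q N m * z^m)
        = (-(z * Q ^ N)) * ∑ m ∈ range (N + 1), (-1)^m * Q^(tri m) * qb Q N m * z^m := by
      rw [← Finset.mul_sum]
    linear_combination -h1 - h2

end


section
variable {Q : ℂ} (hQ : ‖Q‖ < 1)
include hQ

lemma cC_pos : (0:ℝ) < Real.exp (-(‖Q‖ / ((1 - ‖Q‖) * (1 - ‖Q‖)))) := Real.exp_pos _

lemma qb_norm_le (N m : ℕ) :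
    ‖qb Q N m‖ ≤ Real.exp (‖Q‖ / (1 - ‖Q‖))
      / Real.exp (-(‖Q‖ / ((1 - ‖Q‖) * (1 - ‖Q‖)))) ^ 2 := by
  set cB := Real.exp (‖Q‖ / (1 - ‖Q‖)) with hcB
  set cC := Real.exp (-(‖Q‖ / ((1 - ‖Q‖) * (1 - ‖Q‖)))) with hcC
  have hcC0 : (0:ℝ) < cC := Real.exp_pos _
  rcases le_or_gt m N with h | h
  · rw [qb_eq hQ h, norm_div, norm_mul]
    have h1 : ‖qPoch Q Q N‖ ≤ cB := qPoch_norm_le hQ N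
    have h2 : cC ≤ ‖qPoch Q Q m‖ := qPoch_norm_ge hQ hQ m
    have h3 : cC ≤ ‖qPoch Q Q (N - m)‖ := qPoch_norm_ge hQ hQ (N - m)
    have hd : (0:ℝ) < cC * cC := by positivity
    have hm : cC * cC ≤ ‖qPoch Q Q m‖ * ‖qPoch Q Q (N - m)‖ :=
      mul_le_mul h2 h3 hcC0.le (le_trans hcC0.le h2)
    calc ‖qPoch Q Q N‖ / (‖qPoch Q Q m‖ * ‖qPoch Q Q (N - m)‖)
        ≤ cB / (cC * cC) := div_le_div₀ (le_trans (norm_nonneg _) h1) h1 hd hm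
      _ = cB / cC ^ 2 := by ring
  · rw [qb_of_lt hQ h, norm_zero]
    positivity

lemma summable_euler_bound {z : ℂ} (hz : ‖z‖ < 1) (C : ℝ) :
    Summable (fun m : ℕ => C * (‖Q‖ ^ tri m * ‖z‖ ^ m)) := by
  apply Summable.mul_left
  apply summable_of_ratio_norm_eventually_le (r := (1 + ‖z‖) / 2)
    (by rw [div_lt_one (by norm_num)]; linarith)
  filter_upwards with m
  have hb0 : (0:ℝ) ≤ ‖Q‖ ^ tri m * ‖z‖ ^ m := by positivity
  have hb1 : (0:ℝ) ≤ ‖Q‖ ^ tri (m+1) * ‖z‖ ^ (m+1) := by positivity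
  rw [Real.norm_of_nonneg hb1, Real.norm_of_nonneg hb0]
  have : tri (m + 1) = tri m + m := rfl
  rw [this, pow_add, pow_succ]
  have hQm : ‖Q‖ ^ m ≤ 1 := pow_le_one₀ (norm_nonneg Q) hQ.le
  calc ‖Q‖ ^ tri m * ‖Q‖ ^ m * (‖z‖ ^ m * ‖z‖)
      = (‖Q‖ ^ tri m * ‖z‖ ^ m) * (‖Q‖ ^ m * ‖z‖) := by ring
    _ ≤ (‖Q‖ ^ tri m * ‖z‖ ^ m) * ((1 + ‖z‖) / 2) := by
        apply mul_le_mul_of_nonneg_left _ hb0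
        calc ‖Q‖ ^ m * ‖z‖ ≤ 1 * ‖z‖ := mul_le_mul_of_nonneg_right hQm (norm_nonneg z)
          _ = ‖z‖ := one_mul _
          _ ≤ (1 + ‖z‖) / 2 := by linarith
    _ = (1 + ‖z‖) / 2 * (‖Q‖ ^ tri m * ‖z‖ ^ m) := by ring

lemma qb_tendsto (m : ℕ) :
    Tendsto (fun N => qb Q N m) atTop (𝓝 (1 / qPoch Q Q m)) := by
  have hP : qPochInf Q Q ≠ 0 := qPochInf_ne_zero hQ hQ
  have hpm : qPoch Q Q m ≠ 0 := qPoch_ne_zero hQ hQ m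
  have hnum : Tendsto (fun N => qPoch Q Q N) atTop (𝓝 (qPochInf Q Q)) := qPoch_tendsto hQ hQ
  have hden : Tendsto (fun N => qPoch Q Q (N - m)) atTop (𝓝 (qPochInf Q Q)) :=
    hnum.comp (tendsto_sub_atTop_nat m)
  have hden2 : Tendsto (fun N => qPoch Q Q m * qPoch Q Q (N - m)) atTop
      (𝓝 (qPoch Q Q m * qPochInf Q Q)) := hden.const_mul _
  have hne : qPoch Q Q m * qPochInf Q Q ≠ 0 := mul_ne_zero hpm hP
  have hdiv := hnum.div hden2 hne
  have heq : (fun N => qPoch Q Q N / (qPoch Q Q m * qPoch Q Q (N - m)))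
      =ᶠ[atTop] (fun N => qb Q N m) := by
    filter_upwards [eventually_ge_atTop m] with N hN
    exact (qb_eq hQ hN).symm
  have := hdiv.congr' heq
  convert this using 2
  field_simp

theorem euler {z : ℂ} (hz : ‖z‖ < 1) :
    qPochInf z Q = ∑' m : ℕ, (-1) ^ m * Q ^ tri m * z ^ m / qPoch Q Q m := by
  have h1 : Tendsto (fun N => qPoch z Q N) atTop (𝓝 (qPochInf z Q)) := qPoch_tendsto hz hQ
  have h2 : Tendsto (fun N => qPoch z Q N) atTop
      (𝓝 (∑' m : ℕ, (-1) ^ m * Q ^ tri m * z ^ m / qPoch Q Q m)) := by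
    have hre : (fun N => qPoch z Q N)
        = (fun N => ∑' m : ℕ, (-1) ^ m * Q ^ tri m * qb Q N m * z ^ m) := by
      funext N
      rw [qpoch_eq_sum hQ z N]
      rw [tsum_eq_sum (s := range (N + 1))]
      intro m hm
      rw [Finset.mem_range, not_lt] at hm
      rw [qb_of_lt hQ (by omega)]
      ring
    rw [hre]
    apply tendsto_tsum_of_dominated_convergence
      (bound := fun m => Real.exp (‖Q‖ / (1 - ‖Q‖))
        / Real.exp (-(‖Q‖ / ((1 - ‖Q‖) * (1 - ‖Q‖)))) ^ 2 * (‖Q‖ ^ tri m * ‖z‖ ^ m))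
    · exact summable_euler_bound hQ hz _
    · intro m
      have h := ((qb_tendsto hQ m).const_mul ((-1 : ℂ) ^ m * Q ^ tri m)).mul_const (z ^ m)
      have e1 : (-1:ℂ) ^ m * Q ^ tri m * (1 / qPoch Q Q m) * z ^ m
          = (-1) ^ m * Q ^ tri m * z ^ m / qPoch Q Q m := by ring
      rw [e1] at h
      exact h.congr (fun N => by ring)
    · filter_upwards with N m
      rw [show (-1:ℂ) ^ m * Q ^ tri m * qb Q N m * z ^ m
          = ((-1:ℂ) ^ m * Q ^ tri m * z ^ m) * qb Q N m by ring]
      rw [norm_mul, norm_mul, norm_mul, norm_pow, norm_pow, norm_pow]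
      simp only [norm_neg, norm_one, one_pow, one_mul]
      rw [mul_comm]
      apply mul_le_mul (qb_norm_le hQ N m) le_rfl (by positivity)
        (by positivity)
  exact tendsto_nhds_unique h1 h2

end


section
variable {q : ℂ} (hq : ‖q‖ < 1)
include hq

lemma hQnorm : ‖q ^ 2‖ < 1 := by
  rw [norm_pow]
  nlinarith [norm_nonneg q]

lemma hnqnorm : ‖-q‖ < 1 := by rwa [norm_neg]

lemma Vlemma (N : ℕ) :
    ∑ n ∈ range (N + 1), qb (q^2) N n * (-q) ^ (N - n) * qPoch (-q) (q^2) n = 1 := by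
  have hQ : ‖q^2‖ < 1 := hQnorm hq
  induction N with
  | zero => simp [qb_zero hQ, qPoch_zero]
  | succ N ih =>
    set Q : ℂ := q^2 with hQdef
    set f : ℕ → ℂ := fun n => qb Q (N+1) n * (-q) ^ (N + 1 - n) * qPoch (-q) Q n with hf
    set hfun : ℕ → ℂ := fun n => Q ^ n * qb Q N n * (-q) ^ (N + 1 - n) * qPoch (-q) Q n
      with hh
    have hsplit : ∀ m ∈ range (N + 1),
        f (m + 1) = qb Q N m * (-q) ^ (N - m) * qPoch (-q) Q m * (1 - (-q) * Q ^ m)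
          + hfun (m + 1) := by
      intro m hm
      rw [Finset.mem_range] at hm
      have hmN : m ≤ N := by omega
      have e1 : N + 1 - (m + 1) = N - m := by omega
      simp only [hf, hh, e1]
      rw [pascal2 hQ N m, qPoch_succ (-q) Q m]
      ring
    have hsum : ∑ n ∈ range (N + 2), f n
        = ∑ m ∈ range (N + 1), f (m + 1) + f 0 := Finset.sum_range_succ' f (N + 1)
    have hhsum : ∑ m ∈ range (N + 1), hfun (m + 1)
        = ∑ n ∈ range (N + 1), hfun n - hfun 0 := by
      have h1 : ∑ n ∈ range (N + 2), hfun n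
          = ∑ m ∈ range (N + 1), hfun (m + 1) + hfun 0 := Finset.sum_range_succ' hfun (N + 1)
      have h2 : ∑ n ∈ range (N + 2), hfun n
          = ∑ n ∈ range (N + 1), hfun n + hfun (N + 1) := Finset.sum_range_succ hfun (N + 1)
      have h3 : hfun (N + 1) = 0 := by
        simp only [hh]
        rw [qb_of_lt hQ (by omega)]
        ring
      rw [h3, add_zero] at h2
      rw [h2] at h1
      linear_combination -h1
    rw [show N + 1 + 1 = N + 2 from rfl, hsum, Finset.sum_congr rfl hsplit,
      Finset.sum_add_distrib, hhsum]
    have hf0 : f 0 = (-q) ^ (N + 1) := by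
      simp [hf, qb_zero hQ, qPoch_zero]
    have hh0 : hfun 0 = (-q) ^ (N + 1) := by
      simp [hh, qb_zero hQ, qPoch_zero]
    have hcomb : ∑ m ∈ range (N + 1),
        qb Q N m * (-q) ^ (N - m) * qPoch (-q) Q m * (1 - (-q) * Q ^ m)
        + ∑ n ∈ range (N + 1), hfun n
        = ∑ n ∈ range (N + 1), qb Q N n * (-q) ^ (N - n) * qPoch (-q) Q n := by
      rw [← Finset.sum_add_distrib]
      apply Finset.sum_congr rfl
      intro n hn
      rw [Finset.mem_range] at hn
      have e : N + 1 - n = (N - n) + 1 := by omega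
      simp only [hh, e, pow_succ]
      ring
    rw [hf0, hh0]
    linear_combination hcomb + ih

lemma Mlemma (N : ℕ) :
    ∑ n ∈ range (N + 1),
        (-1) ^ (N - n) * q ^ n * (q^2) ^ (N - n) * qPoch (-q) (q^2) n
          / (qPoch (q^2) (q^2) n * qPoch (q^2) (q^2) (N - n))
      = q ^ N / qPoch (q^2) (q^2) N := by
  have hQ : ‖q^2‖ < 1 := hQnorm hq
  have hV := Vlemma hq N
  have h := congrArg (fun x : ℂ => x * (q ^ N / qPoch (q^2) (q^2) N)) hV
  simp only [one_mul] at h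
  rw [Finset.sum_mul] at h
  rw [← h]
  apply Finset.sum_congr rfl
  intro n hn
  rw [Finset.mem_range] at hn
  obtain ⟨k, rfl⟩ : ∃ k, N = n + k := ⟨N - n, by omega⟩
  have e : n + k - n = k := by omega
  rw [e, qb_eq hQ (by omega), e]
  have h1 := qPoch_ne_zero hQ hQ n
  have h2 := qPoch_ne_zero hQ hQ k
  have h3 := qPoch_ne_zero hQ hQ (n + k)
  field_simp
  rw [neg_pow q k]
  ring

lemma Klemma (N : ℕ) :
    ∑ n ∈ range (N + 1), (-1) ^ (N - n) * q ^ n * qPoch (-q) (q^2) n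
        / (qPoch (q^2) (q^2) n * qPoch (q^2) (q^2) (N - n))
      = ∑ k ∈ range (N + 1), (-1) ^ (N - k) * q ^ k / qPoch (q^2) (q^2) k := by
  have hQ : ‖q^2‖ < 1 := hQnorm hq
  induction N with
  | zero => simp [qPoch_zero]
  | succ N ih =>
    set Q : ℂ := q^2 with hQdef
    -- right-hand side recurrence
    have hR : ∑ k ∈ range (N + 2), (-1) ^ (N + 1 - k) * q ^ k / qPoch Q Q k
        = -(∑ k ∈ range (N + 1), (-1) ^ (N - k) * q ^ k / qPoch Q Q k)
          + q ^ (N + 1) / qPoch Q Q (N + 1) := by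
      rw [Finset.sum_range_succ]
      have : ∀ k ∈ range (N + 1), (-1 : ℂ) ^ (N + 1 - k) * q ^ k / qPoch Q Q k
          = -((-1) ^ (N - k) * q ^ k / qPoch Q Q k) := by
        intro k hk
        rw [Finset.mem_range] at hk
        have e : N + 1 - k = (N - k) + 1 := by omega
        rw [e, pow_succ]
        ring
      rw [Finset.sum_congr rfl this, Finset.sum_neg_distrib]
      simp
    -- left-hand side recurrence
    have hL : ∑ n ∈ range (N + 2), (-1) ^ (N + 1 - n) * q ^ n * qPoch (-q) Q n
          / (qPoch Q Q n * qPoch Q Q (N + 1 - n))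
        = -(∑ n ∈ range (N + 1), (-1) ^ (N - n) * q ^ n * qPoch (-q) Q n
          / (qPoch Q Q n * qPoch Q Q (N - n)))
          + ∑ n ∈ range (N + 2),
            (-1) ^ (N + 1 - n) * q ^ n * Q ^ (N + 1 - n) * qPoch (-q) Q n
              / (qPoch Q Q n * qPoch Q Q (N + 1 - n)) := by
      have hdiff : ∀ n ∈ range (N + 2),
          (-1 : ℂ) ^ (N + 1 - n) * q ^ n * Q ^ (N + 1 - n) * qPoch (-q) Q n
              / (qPoch Q Q n * qPoch Q Q (N + 1 - n))
            - (-1) ^ (N + 1 - n) * q ^ n * qPoch (-q) Q n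
              / (qPoch Q Q n * qPoch Q Q (N + 1 - n))
          = (if n ≤ N then (-1 : ℂ) ^ (N - n) * q ^ n * qPoch (-q) Q n
              / (qPoch Q Q n * qPoch Q Q (N - n)) else 0) := by
        intro n hn
        rw [Finset.mem_range] at hn
        rcases le_or_gt n N with h | h
        · rw [if_pos h]
          obtain ⟨k, rfl⟩ : ∃ k, N = n + k := ⟨N - n, by omega⟩
          have e1 : n + k + 1 - n = k + 1 := by omega
          have e2 : n + k - n = k := by omega
          rw [e1, e2, qPoch_succ Q Q k, pow_succ, pow_succ]
          have h1 := qPoch_ne_zero hQ hQ n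
          have h2 := qPoch_ne_zero hQ hQ k
          have h3 := factor_ne_zero hQ hQ k
          field_simp
          linear_combination (q ^ n * qPoch (-q) Q n) * (inv_mul_cancel₀ h3)
        · have e : n = N + 1 := by omega
          subst e
          rw [if_neg (by omega)]
          simp only [Nat.sub_self, pow_zero]
          ring
      have hsum := Finset.sum_congr rfl hdiff
      rw [Finset.sum_sub_distrib] at hsum
      have hif : ∑ n ∈ range (N + 2), (if n ≤ N then (-1 : ℂ) ^ (N - n) * q ^ n
            * qPoch (-q) Q n / (qPoch Q Q n * qPoch Q Q (N - n)) else 0)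
          = ∑ n ∈ range (N + 1), (-1 : ℂ) ^ (N - n) * q ^ n * qPoch (-q) Q n
            / (qPoch Q Q n * qPoch Q Q (N - n)) := by
        rw [Finset.sum_range_succ, if_neg (by omega), add_zero]
        apply Finset.sum_congr rfl
        intro n hn
        rw [Finset.mem_range] at hn
        rw [if_pos (by omega)]
      rw [hif] at hsum
      linear_combination -hsum
    rw [hL, hR, ih]
    congr 1
    exact Mlemma hq (N + 1)

end

lemma diag_tsum {F : ℕ × ℕ → ℂ} (hF : Summable F) :
    ∑' p : ℕ × ℕ, F p = ∑' N : ℕ, ∑ j ∈ range (N + 1), F (N - j, j) := by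
  set φ : ℕ × ℕ → ℕ × ℕ := fun p => (p.1 + p.2, p.2) with hφ
  have hinj : Function.Injective φ := by
    rintro ⟨a, b⟩ ⟨c, d⟩ h
    simp only [hφ, Prod.mk.injEq] at h
    simp only [Prod.mk.injEq]
    omega
  set G : ℕ × ℕ → ℂ := fun x => if x.2 ≤ x.1 then F (x.1 - x.2, x.2) else 0 with hG
  have hcomp : ∀ p : ℕ × ℕ, G (φ p) = F p := by
    rintro ⟨a, b⟩
    simp only [hG, hφ]
    rw [if_pos (by omega)]
    have e : a + b - b = a := by omega
    rw [e]
  have hzero : ∀ x ∉ Set.range φ, G x = 0 := by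
    rintro ⟨N, j⟩ hx
    rw [hG]
    simp only
    rw [if_neg]
    intro h
    exact hx ⟨(N - j, j), by simp only [hφ, Prod.mk.injEq]; exact ⟨by omega, trivial⟩⟩
  have hsupp : Function.support G ⊆ Set.range φ :=
    Function.support_subset_iff'.mpr hzero
  have h1 : ∑' p : ℕ × ℕ, G (φ p) = ∑' x : ℕ × ℕ, G x :=
    hinj.tsum_eq hsupp
  have hGsum : Summable G := by
    rw [← hinj.summable_iff hzero]
    exact hF.congr (fun p => (hcomp p).symm)
  have h2 : ∑' x : ℕ × ℕ, G x = ∑' N : ℕ, ∑' j : ℕ, G (N, j) :=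
    Summable.tsum_prod' hGsum (fun N => hGsum.prod_factor N)
  have h3 : ∀ N : ℕ, ∑' j : ℕ, G (N, j) = ∑ j ∈ range (N + 1), F (N - j, j) := by
    intro N
    rw [tsum_eq_sum (s := range (N + 1))]
    · apply Finset.sum_congr rfl
      intro j hj
      rw [Finset.mem_range] at hj
      rw [hG]
      simp only
      rw [if_pos (by omega)]
    · intro j hj
      rw [Finset.mem_range, not_lt] at hj
      rw [hG]
      simp only
      rw [if_neg (by omega)]
  calc ∑' p : ℕ × ℕ, F p = ∑' p : ℕ × ℕ, G (φ p) := by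
        exact (tsum_congr hcomp).symm
    _ = ∑' x : ℕ × ℕ, G x := h1
    _ = ∑' N : ℕ, ∑' j : ℕ, G (N, j) := h2
    _ = ∑' N : ℕ, ∑ j ∈ range (N + 1), F (N - j, j) := tsum_congr h3

section
variable {q : ℂ} (hq : ‖q‖ < 1)

noncomputable def ffang (q : ℂ) (p : ℕ × ℕ) : ℂ :=
  (-1) ^ p.2 * q ^ ((p.1 + p.2) ^ 2 + (p.1 + p.2) + p.1) * qPoch (-q) (q ^ 2) p.1
    / (qPoch (q ^ 2) (q ^ 2) p.1 * qPoch (q ^ 2) (q ^ 2) p.2)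

noncomputable def ggang (q : ℂ) (p : ℕ × ℕ) : ℂ :=
  (-1) ^ p.1 * q ^ ((p.1 + p.2) ^ 2 + (p.1 + p.2) + p.2) / qPoch (q ^ 2) (q ^ 2) p.2

include hq

lemma hQn : ‖q ^ 2‖ < 1 := by rw [norm_pow]; nlinarith [norm_nonneg q]

lemma summable_geom_prod (C : ℝ) :
    Summable (fun p : ℕ × ℕ => C * (‖q‖ ^ p.1 * ‖q‖ ^ p.2)) := by
  apply Summable.mul_left
  exact (summable_geometric_of_lt_one (norm_nonneg q) hq).mul_of_nonneg
    (summable_geometric_of_lt_one (norm_nonneg q) hq)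
    (fun n => by positivity) (fun n => by positivity)

omit hq in
lemma exp_ge_diag (n m : ℕ) : n + m ≤ (n + m) ^ 2 + (n + m) + n :=
  le_trans (Nat.le_add_left (n + m) ((n + m) ^ 2)) (Nat.le_add_right _ _)

lemma summable_ff : Summable (ffang q) := by
  have hQ : ‖q ^ 2‖ < 1 := hQn hq
  set cB := Real.exp (‖-q‖ / (1 - ‖q ^ 2‖)) with hcB
  set cC := Real.exp (-(‖q ^ 2‖ / ((1 - ‖q ^ 2‖) * (1 - ‖q ^ 2‖)))) with hcC
  have hcC0 : (0:ℝ) < cC := Real.exp_pos _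
  apply Summable.of_norm_bounded (summable_geom_prod hq (cB / cC ^ 2))
  rintro ⟨n, m⟩
  show ‖ffang q (n, m)‖ ≤ _
  rw [ffang]
  simp only
  rw [norm_div, norm_mul, norm_mul, norm_mul, norm_pow, norm_pow]
  simp only [norm_neg, norm_one, one_pow, one_mul]
  have h1 : ‖qPoch (-q) (q ^ 2) n‖ ≤ cB := qPoch_norm_le hQ n
  have h2 : cC ≤ ‖qPoch (q ^ 2) (q ^ 2) n‖ := qPoch_norm_ge hQ hQ n
  have h3 : cC ≤ ‖qPoch (q ^ 2) (q ^ 2) m‖ := qPoch_norm_ge hQ hQ m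
  have hE : ‖q‖ ^ ((n + m) ^ 2 + (n + m) + n) ≤ ‖q‖ ^ (n + m) :=
    pow_le_pow_of_le_one (norm_nonneg q) hq.le (exp_ge_diag n m)
  have hnum : ‖q‖ ^ ((n + m) ^ 2 + (n + m) + n) * ‖qPoch (-q) (q ^ 2) n‖
      ≤ ‖q‖ ^ (n + m) * cB := by
    apply mul_le_mul hE h1 (norm_nonneg _) (by positivity)
  have hden : cC * cC ≤ ‖qPoch (q ^ 2) (q ^ 2) n‖ * ‖qPoch (q ^ 2) (q ^ 2) m‖ :=
    mul_le_mul h2 h3 hcC0.le (le_trans hcC0.le h2)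
  calc ‖q‖ ^ ((n + m) ^ 2 + (n + m) + n) * ‖qPoch (-q) (q ^ 2) n‖
        / (‖qPoch (q ^ 2) (q ^ 2) n‖ * ‖qPoch (q ^ 2) (q ^ 2) m‖)
      ≤ ‖q‖ ^ (n + m) * cB / (cC * cC) := by
        apply div_le_div₀ (by positivity) hnum (by positivity) hden
    _ = cB / cC ^ 2 * (‖q‖ ^ n * ‖q‖ ^ m) := by
        rw [pow_add]
        ring

lemma summable_gg : Summable (ggang q) := by
  have hQ : ‖q ^ 2‖ < 1 := hQn hq
  set cC := Real.exp (-(‖q ^ 2‖ / ((1 - ‖q ^ 2‖) * (1 - ‖q ^ 2‖)))) with hcC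
  have hcC0 : (0:ℝ) < cC := Real.exp_pos _
  apply Summable.of_norm_bounded (summable_geom_prod hq (1 / cC))
  rintro ⟨n, m⟩
  show ‖ggang q (n, m)‖ ≤ _
  rw [ggang]
  simp only
  rw [norm_div, norm_mul, norm_pow, norm_pow]
  simp only [norm_neg, norm_one, one_pow, one_mul]
  have h3 : cC ≤ ‖qPoch (q ^ 2) (q ^ 2) m‖ := qPoch_norm_ge hQ hQ m
  have hE : ‖q‖ ^ ((n + m) ^ 2 + (n + m) + m) ≤ ‖q‖ ^ (n + m) := by
    apply pow_le_pow_of_le_one (norm_nonneg q) hq.le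
    calc n + m ≤ (n + m) ^ 2 + (n + m) := Nat.le_add_left _ _
      _ ≤ (n + m) ^ 2 + (n + m) + m := Nat.le_add_right _ _
  calc ‖q‖ ^ ((n + m) ^ 2 + (n + m) + m) / ‖qPoch (q ^ 2) (q ^ 2) m‖
      ≤ ‖q‖ ^ (n + m) / cC := div_le_div₀ (by positivity) hE hcC0 h3
    _ ≤ 1 / cC * (‖q‖ ^ n * ‖q‖ ^ m) := by
        rw [pow_add]
        ring_nf
        exact le_rfl

end

lemma two_tri (m : ℕ) : 2 * tri m + m = m * m := by
  induction m with
  | zero => rfl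
  | succ m ih =>
    have h : (m + 1) * (m + 1) = m * m + 2 * m + 1 := by ring
    have h2 : tri (m + 1) = tri m + m := rfl
    omega

lemma powid1 (q : ℂ) (n m : ℕ) :
    q ^ (n ^ 2 + 2 * n) * ((q ^ 2) ^ tri m * ((q ^ 2) * (q ^ 2) ^ n) ^ m)
      = q ^ ((n + m) ^ 2 + (n + m) + n) := by
  have l1 : ((q ^ 2) * (q ^ 2) ^ n) ^ m = q ^ (2 * ((n + 1) * m)) := by
    calc ((q ^ 2) * (q ^ 2) ^ n) ^ m = ((q ^ 2) ^ (n + 1)) ^ m := by rw [← pow_succ']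
      _ = (q ^ 2) ^ ((n + 1) * m) := (pow_mul _ _ _).symm
      _ = q ^ (2 * ((n + 1) * m)) := by rw [← pow_mul]
  have l2 : ((q ^ 2) : ℂ) ^ tri m = q ^ (2 * tri m) := (pow_mul q 2 (tri m)).symm
  rw [l1, l2, ← pow_add, ← pow_add]
  congr 1
  have h := two_tri m
  zify at h ⊢
  linear_combination h

lemma powid2 (q : ℂ) (n k : ℕ) :
    (-1 : ℂ) ^ k * ((q ^ 2) ^ tri k * ((-q) * (q ^ 2) ^ (n + 1)) ^ k) * q ^ (n ^ 2 + n)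
      = q ^ ((n + k) ^ 2 + (n + k) + k) := by
  have h1 : ((-q) * (q ^ 2) ^ (n + 1)) ^ k = (-1) ^ k * (q * (q ^ 2) ^ (n + 1)) ^ k := by
    rw [show (-q) * (q ^ 2) ^ (n + 1) = -(q * (q ^ 2) ^ (n + 1)) by ring, neg_pow]
  have h2 : ((-1 : ℂ) ^ k) * ((-1 : ℂ) ^ k) = 1 := by
    rw [← mul_pow]; norm_num
  have l1 : (q * (q ^ 2) ^ (n + 1)) ^ k = q ^ (k + 2 * ((n + 1) * k)) := by
    calc (q * (q ^ 2) ^ (n + 1)) ^ k = q ^ k * ((q ^ 2) ^ (n + 1)) ^ k := mul_pow _ _ _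
      _ = q ^ k * (q ^ 2) ^ ((n + 1) * k) := by rw [← pow_mul]
      _ = q ^ k * q ^ (2 * ((n + 1) * k)) := by rw [← pow_mul]
      _ = q ^ (k + 2 * ((n + 1) * k)) := (pow_add _ _ _).symm
  have l2 : ((q ^ 2) : ℂ) ^ tri k = q ^ (2 * tri k) := (pow_mul q 2 (tri k)).symm
  have hexp : (n + k) ^ 2 + (n + k) + k
      = 2 * tri k + (k + 2 * ((n + 1) * k)) + (n ^ 2 + n) := by
    have h := two_tri k
    zify at h ⊢
    linear_combination -h
  rw [h1, l1, l2, hexp, pow_add, pow_add]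
  linear_combination (q ^ (2 * tri k) * q ^ (k + 2 * ((n + 1) * k)) * q ^ (n ^ 2 + n)) * h2

section
variable {q : ℂ} (hq : ‖q‖ < 1)
include hq

lemma diag_eq (N : ℕ) :
    ∑ j ∈ range (N + 1), ffang q (N - j, j) = ∑ j ∈ range (N + 1), ggang q (N - j, j) := by
  have hQ : ‖q ^ 2‖ < 1 := hQn hq
  set t : ℕ → ℂ := fun n => (-1) ^ (N - n) * q ^ n * qPoch (-q) (q^2) n
    / (qPoch (q^2) (q^2) n * qPoch (q^2) (q^2) (N - n)) with ht
  have hf : ∀ j ∈ range (N + 1), ffang q (N - j, j) = q ^ (N ^ 2 + N) * t (N - j) := by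
    intro j hj
    rw [Finset.mem_range] at hj
    rw [ffang, ht]
    simp only
    have e1 : N - j + j = N := by omega
    have e2 : N - (N - j) = j := by omega
    rw [e1, e2, pow_add]
    ring
  have hg : ∀ j ∈ range (N + 1), ggang q (N - j, j)
      = q ^ (N ^ 2 + N) * ((-1) ^ (N - j) * q ^ j / qPoch (q^2) (q^2) j) := by
    intro j hj
    rw [Finset.mem_range] at hj
    rw [ggang]
    simp only
    have e1 : N - j + j = N := by omega
    rw [e1, pow_add]
    ring
  rw [Finset.sum_congr rfl hf, Finset.sum_congr rfl hg, ← Finset.mul_sum, ← Finset.mul_sum]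
  congr 1
  have hrefl := Finset.sum_range_reflect t (N + 1)
  simp only [Nat.add_sub_cancel] at hrefl
  rw [hrefl, ht]
  exact Klemma hq N

theorem stmt_1' :
    ∑' n : ℕ, q ^ (n ^ 2 + 2 * n) * qPoch (-q) (q ^ 2) n / (qPoch (q ^ 2) (q ^ 2) n) ^ 2
      = qPochInf (-q) (q ^ 2) / qPochInf (q ^ 2) (q ^ 2)
        * ∑' n : ℕ, (-1) ^ n * q ^ (n ^ 2 + n) / qPoch (-q) (q ^ 2) (n + 1) := by
  have hQ : ‖q ^ 2‖ < 1 := hQn hq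
  have hnq : ‖-q‖ < 1 := by rwa [norm_neg]
  have hP2 : qPochInf (q ^ 2) (q ^ 2) ≠ 0 := qPochInf_ne_zero hQ hQ
  apply mul_right_cancel₀ hP2
  have hA : (∑' n : ℕ, q ^ (n ^ 2 + 2 * n) * qPoch (-q) (q ^ 2) n
        / (qPoch (q ^ 2) (q ^ 2) n) ^ 2) * qPochInf (q ^ 2) (q ^ 2)
      = ∑' p : ℕ × ℕ, ffang q p := by
    rw [← tsum_mul_right, Summable.tsum_prod' (summable_ff hq) (fun n => (summable_ff hq).prod_factor n)]
    apply tsum_congr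
    intro n
    rw [qPochInf_split hQ hQ n, euler hQ (norm_mul_pow_lt hQ hQ n)]
    calc q ^ (n ^ 2 + 2 * n) * qPoch (-q) (q ^ 2) n / (qPoch (q ^ 2) (q ^ 2) n) ^ 2
          * (qPoch (q ^ 2) (q ^ 2) n * ∑' m : ℕ, (-1) ^ m * (q ^ 2) ^ tri m
            * ((q ^ 2) * (q ^ 2) ^ n) ^ m / qPoch (q ^ 2) (q ^ 2) m)
        = ∑' m : ℕ, (q ^ (n ^ 2 + 2 * n) * qPoch (-q) (q ^ 2) n
            / (qPoch (q ^ 2) (q ^ 2) n) ^ 2 * qPoch (q ^ 2) (q ^ 2) n)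
            * ((-1) ^ m * (q ^ 2) ^ tri m * ((q ^ 2) * (q ^ 2) ^ n) ^ m
              / qPoch (q ^ 2) (q ^ 2) m) := by
          rw [tsum_mul_left]
          try ring
      _ = ∑' m : ℕ, ffang q (n, m) := by
          apply tsum_congr
          intro m
          rw [ffang]
          simp only
          rw [← powid1 q n m]
          have hpkn := qPoch_ne_zero hQ hQ n
          have hpkm := qPoch_ne_zero hQ hQ m
          field_simp
  have hB : qPochInf (-q) (q ^ 2) / qPochInf (q ^ 2) (q ^ 2)
        * (∑' n : ℕ, (-1) ^ n * q ^ (n ^ 2 + n) / qPoch (-q) (q ^ 2) (n + 1))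
        * qPochInf (q ^ 2) (q ^ 2)
      = ∑' p : ℕ × ℕ, ggang q p := by
    have h0 : qPochInf (-q) (q ^ 2) / qPochInf (q ^ 2) (q ^ 2)
          * (∑' n : ℕ, (-1) ^ n * q ^ (n ^ 2 + n) / qPoch (-q) (q ^ 2) (n + 1))
          * qPochInf (q ^ 2) (q ^ 2)
        = qPochInf (-q) (q ^ 2)
          * ∑' n : ℕ, (-1) ^ n * q ^ (n ^ 2 + n) / qPoch (-q) (q ^ 2) (n + 1) := by
      field_simp
    rw [h0, ← tsum_mul_left, Summable.tsum_prod' (summable_gg hq) (fun n => (summable_gg hq).prod_factor n)]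
    apply tsum_congr
    intro n
    rw [qPochInf_split hnq hQ (n + 1), euler hQ (norm_mul_pow_lt hnq hQ (n + 1))]
    calc qPoch (-q) (q ^ 2) (n + 1) * (∑' k : ℕ, (-1) ^ k * (q ^ 2) ^ tri k
            * ((-q) * (q ^ 2) ^ (n + 1)) ^ k / qPoch (q ^ 2) (q ^ 2) k)
          * ((-1) ^ n * q ^ (n ^ 2 + n) / qPoch (-q) (q ^ 2) (n + 1))
        = ∑' k : ℕ, (qPoch (-q) (q ^ 2) (n + 1)
            * ((-1) ^ n * q ^ (n ^ 2 + n) / qPoch (-q) (q ^ 2) (n + 1)))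
            * ((-1) ^ k * (q ^ 2) ^ tri k * ((-q) * (q ^ 2) ^ (n + 1)) ^ k
              / qPoch (q ^ 2) (q ^ 2) k) := by
          rw [tsum_mul_left]
          try ring
      _ = ∑' k : ℕ, ggang q (n, k) := by
          apply tsum_congr
          intro k
          rw [ggang]
          simp only
          rw [← powid2 q n k]
          have hp1 := qPoch_ne_zero hnq hQ (n + 1)
          have hpkk := qPoch_ne_zero hQ hQ k
          field_simp
  rw [hA, hB]
  rw [diag_tsum (summable_ff hq), diag_tsum (summable_gg hq)]
  exact tsum_congr (diag_eq hq)

end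

theorem stmt_1 (q : ℂ) (hq : ‖q‖ < 1) :
    ∑' n : ℕ, q ^ (n ^ 2 + 2 * n) * qPoch (-q) (q ^ 2) n / (qPoch (q ^ 2) (q ^ 2) n) ^ 2
      = qPochInf (-q) (q ^ 2) / qPochInf (q ^ 2) (q ^ 2)
        * ∑' n : ℕ, (-1) ^ n * q ^ (n ^ 2 + n) / qPoch (-q) (q ^ 2) (n + 1) := by
  exact stmt_1' hq
end

section
/- For all complex q with |q| < 1, the sum over n ≥ 0 of (-1)^n q^{n^2+n} / (-q;q^2)_{n+1} equals the sum over j ≥ 0 of q^{3j^2+2j} (1 - q^{2j+1}). -/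
open Finset Filter

namespace RFaux

noncomputable def P (q : ℂ) (n : ℕ) : ℂ := ∏ i ∈ Finset.range n, (1 + q ^ (2*i+1))

lemma qPoch_eq (q : ℂ) (n : ℕ) : qPoch (-q) (q^2) n = P q n :=
  Finset.prod_congr rfl fun i _ => by ring

lemma P_succ (q : ℂ) (n : ℕ) : P q (n+1) = P q n * (1 + q^(2*n+1)) :=
  Finset.prod_range_succ _ _

lemma P_ne_zero {q : ℂ} (hq : ‖q‖ < 1) (n : ℕ) : P q n ≠ 0 := by
  refine Finset.prod_ne_zero_iff.2 fun i _ => ?_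
  intro h
  have h1 : q ^ (2*i+1) = -1 := by linear_combination h
  have h2 : ‖q ^ (2*i+1)‖ < 1 := by
    rw [norm_pow]
    exact pow_lt_one₀ (norm_nonneg q) hq (by omega)
  rw [h1] at h2; simp at h2

/-- key finite-sum manipulation (lemma A) -/
lemma lemA (q : ℂ) (m : ℕ) (x : ℂ) :
    1 - (1+x) * (∑ k ∈ range (m+1), (-1)^k * x^k * P q k)
      = x*q*(∑ k ∈ range m, (-1)^k * (x*q^2)^k * P q k) + (-1)^(m+1) * x^(m+1) * P q m := by
  induction m with
  | zero => simp [P]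
  | succ m ih =>
      rw [sum_range_succ (fun k => (-1:ℂ)^k * x^k * P q k) (m+1),
          sum_range_succ (fun k => (-1:ℂ)^k * (x*q^2)^k * P q k) m, P_succ]
      linear_combination ih

lemma lemStar (q : ℂ) (N : ℕ) :
    1 - (1+q^(2*N+3)) * (∑ k ∈ range (N+1), (-1)^k * (q^(2*N+3))^k * P q k)
      - q^(2*N+3)*q*(∑ k ∈ range (N+2), (-1)^k * (q^(2*N+3)*q^2)^k * P q k)
    = (-1)^(N+1) * P q (N+2) * (q^(2*N+3))^(N+1) * (1-q^(2*N+3)) := by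
  have h := lemA q N (q^(2*N+3))
  rw [sum_range_succ (fun k => (-1:ℂ)^k * (q^(2*N+3)*q^2)^k * P q k) (N+1),
      sum_range_succ (fun k => (-1:ℂ)^k * (q^(2*N+3)*q^2)^k * P q k) N,
      P_succ q (N+1), P_succ q N]
  linear_combination h

lemma partialSum (q : ℂ) (hq : ‖q‖ < 1) (N : ℕ) :
    ∑ n ∈ range (N+1), ((-1)^n * q^(n^2+n) / P q (n+1))
      = ∑ j ∈ range (N+1), (q^(3*j^2+2*j) * (1 - q^(2*j+1)))
        + (-1)^N * q^((N+1)*(N+2)) * (∑ k ∈ range (N+1), (-1)^k * (q^(2*N+3))^k * P q k)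
          / P q (N+1) := by
  induction N with
  | zero =>
      have h1 : P q 1 ≠ 0 := P_ne_zero hq 1
      have hP1 : P q 1 = 1 + q := by simp [P]
      rw [hP1] at h1 ⊢
      simp only [Finset.sum_range_one, P, Finset.range_one]
      norm_num
      field_simp
      ring
  | succ N ih =>
      rw [sum_range_succ (fun n => (-1:ℂ)^n * q^(n^2+n) / P q (n+1)) (N+1),
          sum_range_succ (fun j => q^(3*j^2+2*j) * (1 - q^(2*j+1))) (N+1), ih]
      have hP1 : P q (N+1) ≠ 0 := P_ne_zero hq (N+1)
      have hP2 : P q (N+2) ≠ 0 := P_ne_zero hq (N+2)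
      have hstar := lemStar q N
      have hPP : P q (N+2) = P q (N+1) * (1+q^(2*N+3)) := by
        rw [P_succ, show 2*(N+1)+1 = 2*N+3 from by omega]
      have hx1 : (1:ℂ)+q^(2*N+3) ≠ 0 := by
        rw [hPP] at hP2; exact right_ne_zero_of_mul hP2
      have e1 : q^((N+1)^2+(N+1)) = q^((N+1)*(N+2)) := by
        rw [show (N+1)^2+(N+1) = (N+1)*(N+2) from by ring]
      have e2 : q^((N+2)*(N+3)) = q^((N+1)*(N+2)) * (q^(2*N+3)*q) := by
        rw [show (N+2)*(N+3) = (N+1)*(N+2)+(2*N+3+1) from by ring, pow_add, pow_add, pow_one]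
      have e3 : q^(3*(N+1)^2+2*(N+1)) = q^((N+1)*(N+2)) * (q^(2*N+3))^(N+1) := by
        rw [← pow_mul, ← pow_add,
          show 3*(N+1)^2+2*(N+1) = (N+1)*(N+2)+(2*N+3)*(N+1) from by ring]
      have e4 : q^(2*(N+1)+3) = q^(2*N+3)*q^2 := by
        rw [← pow_add, show 2*(N+1)+3 = 2*N+3+2 from by omega]
      have e5 : q^(2*(N+1)+1) = q^(2*N+3) := by
        rw [show 2*(N+1)+1 = 2*N+3 from by omega]
      rw [e1, e2, e3, e4, e5, hPP]
      rw [hPP] at hstar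
      have hs : ((-1:ℂ))^N * (-1)^N = 1 := by
        rw [← pow_add]; exact Even.neg_one_pow ⟨N, rfl⟩
      field_simp
      linear_combination (-(-1)^N * q^((N+1)*(N+2))) * hstar
        + (P q (N+1) * (1+q^(2*N+3)) * q^((N+1)*(N+2)) * (q^(2*N+3))^(N+1)
            * (1-q^(2*N+3))) * hs

lemma norm_P_le {q : ℂ} (hq : ‖q‖ < 1) (n : ℕ) : ‖P q n‖ ≤ 2^n := by
  rw [P, norm_prod]
  calc ∏ i ∈ range n, ‖1 + q^(2*i+1)‖ ≤ ∏ i ∈ range n, 2 := by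
        refine Finset.prod_le_prod (fun i _ => norm_nonneg _) (fun i _ => ?_)
        calc ‖1 + q^(2*i+1)‖ ≤ ‖(1:ℂ)‖ + ‖q^(2*i+1)‖ := norm_add_le _ _
          _ ≤ 1 + 1 := by
              rw [norm_one, norm_pow]
              have := pow_le_one₀ (norm_nonneg q) hq.le (n := 2*i+1)
              linarith
          _ = 2 := by norm_num
    _ = 2^n := by rw [Finset.prod_const, card_range]

lemma norm_P_ge {q : ℂ} (hq : ‖q‖ < 1) (n : ℕ) : (1-‖q‖)^n ≤ ‖P q n‖ := by
  rw [P, norm_prod]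
  calc (1-‖q‖)^n = ∏ i ∈ range n, (1-‖q‖) := by rw [Finset.prod_const, card_range]
    _ ≤ ∏ i ∈ range n, ‖1 + q^(2*i+1)‖ := by
        refine Finset.prod_le_prod (fun i _ => by linarith) (fun i _ => ?_)
        have h1 : ‖q^(2*i+1)‖ ≤ ‖q‖ := by
          rw [norm_pow]
          calc ‖q‖^(2*i+1) ≤ ‖q‖^1 :=
                pow_le_pow_of_le_one (norm_nonneg q) hq.le (by omega)
            _ = ‖q‖ := pow_one _
        have h2 : (1:ℝ) ≤ ‖1 + q^(2*i+1)‖ + ‖q^(2*i+1)‖ := by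
          calc (1:ℝ) = ‖(1 + q^(2*i+1)) - q^(2*i+1)‖ := by norm_num
            _ ≤ _ := norm_sub_le _ _
        linarith

lemma summable_L {q : ℂ} (hq : ‖q‖ < 1) :
    Summable (fun n : ℕ => (-1)^n * q^(n^2+n) / P q (n+1)) := by
  have ht0 : (0:ℝ) ≤ ‖q‖ := norm_nonneg q
  have ht1 : (0:ℝ) < 1 - ‖q‖ := by linarith
  have hr : Filter.Tendsto (fun n : ℕ => ‖q‖^n / (1-‖q‖)) atTop (nhds 0) := by
    simpa using (tendsto_pow_atTop_nhds_zero_of_lt_one ht0 hq).div_const (1-‖q‖)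
  have hev : ∀ᶠ n : ℕ in atTop, ‖q‖^n / (1-‖q‖) ≤ 1/2 :=
    hr.eventually_le_const (by norm_num)
  refine Summable.of_norm_bounded_eventually_nat (g := fun n => (1/2:ℝ)^n)
    (summable_geometric_of_lt_one (by norm_num) (by norm_num)) ?_
  filter_upwards [hev] with n hn
  have hb : ‖(-1:ℂ)^n * q^(n^2+n) / P q (n+1)‖ ≤ (‖q‖^n / (1-‖q‖))^(n+1) := by
    rw [norm_div, norm_mul, norm_pow, norm_pow, norm_neg, norm_one, one_pow, one_mul,
      div_pow, ← pow_mul]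
    rw [show n*(n+1) = n^2+n from by ring]
    exact div_le_div_of_nonneg_left (pow_nonneg ht0 _) (pow_pos ht1 _) (norm_P_ge hq (n+1))
  have hh : (‖q‖^n / (1-‖q‖))^(n+1) ≤ (1/2:ℝ)^(n+1) := by
    apply pow_le_pow_left₀ (div_nonneg (pow_nonneg ht0 _) ht1.le) hn
  have hhh : ((1:ℝ)/2)^(n+1) ≤ (1/2)^n := by
    apply pow_le_pow_of_le_one (by norm_num) (by norm_num) (by omega)
  linarith

lemma summable_R {q : ℂ} (hq : ‖q‖ < 1) :
    Summable (fun j : ℕ => q^(3*j^2+2*j) * (1 - q^(2*j+1))) := by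
  have ht0 : (0:ℝ) ≤ ‖q‖ := norm_nonneg q
  refine Summable.of_norm_bounded (g := fun j => 2 * ‖q‖^j)
    ((summable_geometric_of_lt_one ht0 hq).mul_left 2) ?_
  intro j
  rw [norm_mul, norm_pow]
  have h1 : ‖q‖^(3*j^2+2*j) ≤ ‖q‖^j :=
    pow_le_pow_of_le_one ht0 hq.le (by nlinarith)
  have h2 : ‖1 - q^(2*j+1)‖ ≤ 2 := by
    calc ‖1 - q^(2*j+1)‖ ≤ ‖(1:ℂ)‖ + ‖q^(2*j+1)‖ := norm_sub_le _ _
      _ ≤ 1 + 1 := by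
          rw [norm_one, norm_pow]
          have := pow_le_one₀ ht0 hq.le (n := 2*j+1)
          linarith
      _ = 2 := by norm_num
  calc ‖q‖^(3*j^2+2*j) * ‖1 - q^(2*j+1)‖ ≤ ‖q‖^j * 2 := by
        apply mul_le_mul h1 h2 (norm_nonneg _) (pow_nonneg ht0 _)
    _ = 2 * ‖q‖^j := by ring

lemma remainder_tendsto {q : ℂ} (hq : ‖q‖ < 1) :
    Filter.Tendsto (fun N : ℕ => (-1)^N * q^((N+1)*(N+2))
      * (∑ k ∈ range (N+1), (-1)^k * (q^(2*N+3))^k * P q k) / P q (N+1)) atTop (nhds 0) := by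
  have ht0 : (0:ℝ) ≤ ‖q‖ := norm_nonneg q
  have ht1 : (0:ℝ) < 1 - ‖q‖ := by linarith
  rw [tendsto_zero_iff_norm_tendsto_zero]
  have hb : ∀ N : ℕ, ‖(-1:ℂ)^N * q^((N+1)*(N+2))
      * (∑ k ∈ range (N+1), (-1)^k * (q^(2*N+3))^k * P q k) / P q (N+1)‖
      ≤ (‖q‖^(N+2) * 2 / (1-‖q‖))^(N+1) := by
    intro N
    have hW : ‖∑ k ∈ range (N+1), (-1:ℂ)^k * (q^(2*N+3))^k * P q k‖ ≤ 2^(N+1) := by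
      calc ‖∑ k ∈ range (N+1), (-1:ℂ)^k * (q^(2*N+3))^k * P q k‖
          ≤ ∑ k ∈ range (N+1), ‖(-1:ℂ)^k * (q^(2*N+3))^k * P q k‖ := norm_sum_le _ _
        _ ≤ ∑ k ∈ range (N+1), (2:ℝ)^k := by
            refine Finset.sum_le_sum (fun k _ => ?_)
            rw [norm_mul, norm_mul, norm_pow, norm_pow, norm_neg, norm_one, one_pow,
              one_mul, norm_pow]
            calc (‖q‖^(2*N+3))^k * ‖P q k‖ ≤ 1 * 2^k := by
                  apply mul_le_mul _ (norm_P_le hq k) (norm_nonneg _) (by norm_num)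
                  exact pow_le_one₀ (pow_nonneg ht0 _) (pow_le_one₀ ht0 hq.le)
              _ = 2^k := one_mul _
        _ ≤ 2^(N+1) := by
            rw [geom_sum_eq (by norm_num : (2:ℝ) ≠ 1)]
            norm_num
    rw [norm_div, norm_mul, norm_mul, norm_pow, norm_pow, norm_neg, norm_one, one_pow,
      one_mul]
    calc ‖q‖^((N+1)*(N+2)) * ‖∑ k ∈ range (N+1), (-1:ℂ)^k * (q^(2*N+3))^k * P q k‖
          / ‖P q (N+1)‖
        ≤ ‖q‖^((N+1)*(N+2)) * 2^(N+1) / (1-‖q‖)^(N+1) :=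
          div_le_div₀ (by positivity)
            (mul_le_mul_of_nonneg_left hW (pow_nonneg ht0 _)) (pow_pos ht1 _)
            (norm_P_ge hq (N+1))
      _ = (‖q‖^(N+2) * 2 / (1-‖q‖))^(N+1) := by
          rw [div_pow, mul_pow, ← pow_mul,
            show (N+2)*(N+1) = (N+1)*(N+2) from Nat.mul_comm _ _]
  have hr : Filter.Tendsto (fun N : ℕ => ‖q‖^(N+2) * 2 / (1-‖q‖)) atTop (nhds 0) := by
    have h1 : Filter.Tendsto (fun N : ℕ => ‖q‖^(N+2)) atTop (nhds 0) :=
      (tendsto_pow_atTop_nhds_zero_of_lt_one ht0 hq).comp (tendsto_add_atTop_nat 2)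
    simpa using (h1.mul_const 2).div_const (1-‖q‖)
  have hev : ∀ᶠ N : ℕ in atTop, ‖q‖^(N+2) * 2 / (1-‖q‖) ≤ 1/2 :=
    hr.eventually_le_const (by norm_num)
  apply squeeze_zero' (Filter.Eventually.of_forall (fun N => norm_nonneg _))
  · filter_upwards [hev] with N hN
    calc ‖(-1:ℂ)^N * q^((N+1)*(N+2))
          * (∑ k ∈ range (N+1), (-1)^k * (q^(2*N+3))^k * P q k) / P q (N+1)‖
        ≤ (‖q‖^(N+2) * 2 / (1-‖q‖))^(N+1) := hb N
      _ ≤ (1/2:ℝ)^(N+1) := by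
          apply pow_le_pow_left₀ _ hN
          positivity
      _ ≤ (1/2:ℝ)^N :=
          pow_le_pow_of_le_one (by norm_num) (by norm_num) (by omega)
  · exact tendsto_pow_atTop_nhds_zero_of_lt_one (by norm_num) (by norm_num)

end RFaux

open RFaux Finset Filter

theorem stmt_2 (q : ℂ) (hq : ‖q‖ < 1) :
    ∑' n : ℕ, (-1) ^ n * q ^ (n ^ 2 + n) / qPoch (-q) (q ^ 2) (n + 1)
      = ∑' j : ℕ, q ^ (3 * j ^ 2 + 2 * j) * (1 - q ^ (2 * j + 1)) := by
  have hL := summable_L hq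
  have hR := summable_R hq
  have h1 : Tendsto (fun N : ℕ => ∑ n ∈ range (N+1), ((-1)^n * q^(n^2+n) / P q (n+1)))
      atTop (nhds (∑' n : ℕ, (-1)^n * q^(n^2+n) / P q (n+1))) :=
    hL.hasSum.tendsto_sum_nat.comp (tendsto_add_atTop_nat 1)
  have h2 : Tendsto (fun N : ℕ => ∑ j ∈ range (N+1), (q^(3*j^2+2*j) * (1 - q^(2*j+1))))
      atTop (nhds (∑' j : ℕ, q^(3*j^2+2*j) * (1 - q^(2*j+1)))) :=
    hR.hasSum.tendsto_sum_nat.comp (tendsto_add_atTop_nat 1)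
  have h3 : Tendsto (fun N : ℕ => ∑ n ∈ range (N+1), ((-1)^n * q^(n^2+n) / P q (n+1))
        - ∑ j ∈ range (N+1), (q^(3*j^2+2*j) * (1 - q^(2*j+1)))) atTop (nhds 0) := by
    have heq : (fun N : ℕ => ∑ n ∈ range (N+1), ((-1)^n * q^(n^2+n) / P q (n+1))
        - ∑ j ∈ range (N+1), (q^(3*j^2+2*j) * (1 - q^(2*j+1))))
        = fun N : ℕ => (-1)^N * q^((N+1)*(N+2))
          * (∑ k ∈ range (N+1), (-1)^k * (q^(2*N+3))^k * P q k) / P q (N+1) := by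
      funext N
      rw [partialSum q hq N]
      ring
    rw [heq]
    exact remainder_tendsto hq
  have h4 : (∑' n : ℕ, (-1)^n * q^(n^2+n) / P q (n+1))
      - (∑' j : ℕ, q^(3*j^2+2*j) * (1 - q^(2*j+1))) = 0 :=
    tendsto_nhds_unique (h1.sub h2) h3
  have h5 : ∑' n : ℕ, (-1)^n * q^(n^2+n) / qPoch (-q) (q^2) (n+1)
      = ∑' n : ℕ, (-1)^n * q^(n^2+n) / P q (n+1) :=
    tsum_congr (fun n => by rw [qPoch_eq])
  rw [h5]
  exact sub_eq_zero.mp h4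
end

section
/- For all complex q with |q| < 1, the sum over n ≥ 0 of (-1)^n q^{n(n+1)/2} / (-q;q)_n equals the sum over j ≥ 0 of q^{j(3j+1)/2} (1 - q^{2j+1}). -/
open Filter Finset Topology

namespace S9

noncomputable def bb (q : ℂ) (j n : ℕ) : ℂ :=
  (-1) ^ n * q ^ (n * (n + 1) / 2 + 2 * j * n) / ∏ i ∈ Finset.range n, (1 + q ^ (j + 1 + i))

noncomputable def BB (q : ℂ) (j : ℕ) : ℂ := ∑' n, bb q j n

lemma aux_half (n : ℕ) : (n + 1) * (n + 2) / 2 = n * (n + 1) / 2 + (n + 1) := by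
  have h : (n + 1) * (n + 2) = n * (n + 1) + 2 * (n + 1) := by ring
  rw [h, Nat.add_mul_div_left _ _ (by norm_num)]

lemma aux_pent (j : ℕ) : (j + 1) * (3 * (j + 1) + 1) / 2 = j * (3 * j + 1) / 2 + (3 * j + 2) := by
  have h : (j + 1) * (3 * (j + 1) + 1) = j * (3 * j + 1) + 2 * (3 * j + 2) := by ring
  rw [h, Nat.add_mul_div_left _ _ (by norm_num)]

variable {q : ℂ} (hq : ‖q‖ < 1)

include hq in
lemma one_add_ne (k : ℕ) : (1 : ℂ) + q ^ (k + 1) ≠ 0 := by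
  intro h
  have h2 : ‖q ^ (k + 1)‖ < 1 := by
    rw [norm_pow]
    calc ‖q‖ ^ (k + 1) ≤ ‖q‖ ^ 1 := by
          apply pow_le_pow_of_le_one (norm_nonneg q) hq.le
          omega
      _ = ‖q‖ := pow_one _
      _ < 1 := hq
  have : q ^ (k + 1) = -1 := by linear_combination h
  rw [this] at h2
  simp at h2

include hq in
lemma norm_one_add_ge (k : ℕ) : 1 - ‖q‖ ≤ ‖(1 : ℂ) + q ^ (k + 1)‖ := by
  have h1 : ‖(1:ℂ)‖ - ‖-(q ^ (k+1))‖ ≤ ‖(1:ℂ) - (-(q ^ (k+1)))‖ := norm_sub_norm_le _ _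
  simp only [norm_one, norm_neg, sub_neg_eq_add, norm_pow] at h1
  refine le_trans ?_ h1
  have : ‖q‖ ^ (k + 1) ≤ ‖q‖ := by
    calc ‖q‖ ^ (k + 1) ≤ ‖q‖ ^ 1 := by
          apply pow_le_pow_of_le_one (norm_nonneg q) hq.le; omega
      _ = ‖q‖ := pow_one _
  linarith

include hq in
lemma norm_prod_ge (j n : ℕ) :
    (1 - ‖q‖) ^ n ≤ ‖∏ i ∈ Finset.range n, ((1:ℂ) + q ^ (j + 1 + i))‖ := by
  rw [norm_prod]
  calc (1 - ‖q‖) ^ n = ∏ _i ∈ Finset.range n, (1 - ‖q‖) := by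
        rw [Finset.prod_const, Finset.card_range]
    _ ≤ ∏ i ∈ Finset.range n, ‖(1:ℂ) + q ^ (j + 1 + i)‖ := by
        apply Finset.prod_le_prod
        · intro i _; linarith [norm_nonneg q]
        · intro i _
          have := norm_one_add_ge hq (j + i)
          have e : j + i + 1 = j + 1 + i := by omega
          rwa [e] at this

end S9

namespace S9
variable {q : ℂ} (hq : ‖q‖ < 1)

lemma bb_succ (j n : ℕ) :
    bb q j (n + 1) = bb q j n * (-(q ^ (n + 1 + 2 * j)) / (1 + q ^ (j + 1 + n))) := by
  unfold bb
  rw [Finset.prod_range_succ]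
  have he : (n + 1) * (n + 1 + 1) / 2 + 2 * j * (n + 1)
      = (n * (n + 1) / 2 + 2 * j * n) + (n + 1 + 2 * j) := by
    show (n + 1) * (n + 2) / 2 + 2 * j * (n + 1) = _
    have h1 := aux_half n
    have h2 : 2 * j * (n + 1) = 2 * j * n + 2 * j := by ring
    omega
  rw [he, pow_add, pow_succ]
  rw [div_mul_div_comm]
  ring

include hq in
lemma norm_bb_le (j n : ℕ) :
    ‖bb q j n‖ ≤ ‖q‖ ^ (n * (n + 1) / 2) / (1 - ‖q‖) ^ n := by
  unfold bb
  rw [norm_div, norm_mul, norm_pow, norm_pow, norm_neg, norm_one, one_pow, one_mul]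
  have hd : (0:ℝ) < (1 - ‖q‖) ^ n := pow_pos (by linarith) n
  exact div_le_div₀ (by positivity)
    (pow_le_pow_of_le_one (norm_nonneg q) hq.le (by omega)) hd (norm_prod_ge hq j n)

include hq in
lemma summable_bb (j : ℕ) : Summable (fun n => bb q j n) := by
  apply summable_of_ratio_norm_eventually_le (r := 1/2) (by norm_num)
  have ht : Tendsto (fun n : ℕ => ‖q‖ ^ (n + 1)) atTop (𝓝 0) := by
    have := tendsto_pow_atTop_nhds_zero_of_lt_one (norm_nonneg q) hq
    exact this.comp (tendsto_add_atTop_nat 1)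
  have hev : ∀ᶠ n : ℕ in atTop, ‖q‖ ^ (n + 1) < (1 - ‖q‖) / 2 :=
    ht.eventually_lt_const (by linarith)
  filter_upwards [hev] with n hn
  have hden : 1 - ‖q‖ ≤ ‖1 + q ^ (j + 1 + n)‖ := by
    have h := norm_one_add_ge hq (j + n)
    have e : j + n + 1 = j + 1 + n := by omega
    rwa [e] at h
  have hr : ‖-(q ^ (n + 1 + 2 * j)) / (1 + q ^ (j + 1 + n))‖ ≤ 1 / 2 := by
    rw [norm_div, norm_neg, norm_pow]
    rw [div_le_iff₀ (lt_of_lt_of_le (by linarith) hden)]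
    calc ‖q‖ ^ (n + 1 + 2 * j) ≤ ‖q‖ ^ (n + 1) :=
          pow_le_pow_of_le_one (norm_nonneg q) hq.le (by omega)
      _ ≤ (1 - ‖q‖) / 2 := hn.le
      _ ≤ 1 / 2 * ‖1 + q ^ (j + 1 + n)‖ := by linarith
  calc ‖bb q j (n + 1)‖ = ‖bb q j n‖ * ‖-(q ^ (n + 1 + 2 * j)) / (1 + q ^ (j + 1 + n))‖ := by
        rw [bb_succ, norm_mul]
    _ ≤ ‖bb q j n‖ * (1 / 2) := mul_le_mul_of_nonneg_left hr (norm_nonneg _)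
    _ = 1 / 2 * ‖bb q j n‖ := mul_comm _ _

end S9

namespace S9
variable {q : ℂ} (hq : ‖q‖ < 1)

lemma tsum_telescope {f : ℕ → ℂ} (hf : Summable f) :
    ∑' n, (f n - f (n + 1)) = f 0 := by
  have hf1 : Summable (fun n => f (n + 1)) := (summable_nat_add_iff 1).2 hf
  have hs : Summable (fun n => f n - f (n + 1)) := hf.sub hf1
  have h0 : Tendsto f atTop (𝓝 0) := hf.tendsto_atTop_zero
  have h1 : Tendsto (fun n => ∑ i ∈ Finset.range n, (f i - f (i + 1))) atTop
      (𝓝 (∑' n, (f n - f (n + 1)))) := hs.hasSum.tendsto_sum_nat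
  have h2 : Tendsto (fun n => ∑ i ∈ Finset.range n, (f i - f (i + 1))) atTop (𝓝 (f 0)) := by
    simp only [Finset.sum_range_sub' f]
    simpa using tendsto_const_nhds.sub h0
  exact tendsto_nhds_unique h1 h2

lemma prod_split (j n : ℕ) :
    ∏ i ∈ Finset.range (n + 1), ((1:ℂ) + q ^ (j + 1 + i))
      = (1 + q ^ (j + 1)) * ∏ i ∈ Finset.range n, ((1:ℂ) + q ^ (j + 1 + 1 + i)) := by
  rw [Finset.prod_range_succ', mul_comm]
  congr 1
  exact Finset.prod_congr rfl fun i _ => by rw [show j + 1 + (i + 1) = j + 1 + 1 + i by omega]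

include hq in
lemma prod_ne (j n : ℕ) : (∏ i ∈ Finset.range n, ((1:ℂ) + q ^ (j + 1 + i))) ≠ 0 := by
  have h : (0:ℝ) < ‖∏ i ∈ Finset.range n, ((1:ℂ) + q ^ (j + 1 + i))‖ :=
    lt_of_lt_of_le (pow_pos (by linarith) n) (norm_prod_ge hq j n)
  exact norm_pos_iff.mp h

include hq in
lemma shift_eq (j n : ℕ) :
    q ^ (3 * j + 2) * bb q (j + 1) n
      = -((1 + q ^ (j + 1)) * (q ^ (n + j + 1) * bb q j (n + 1))) := by
  have hne : (1:ℂ) + q ^ (j + 1) ≠ 0 := one_add_ne hq j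
  have hA : (∏ i ∈ Finset.range n, ((1:ℂ) + q ^ (j + 1 + 1 + i))) ≠ 0 := prod_ne hq (j + 1) n
  have he2 : 3 * j + 2 + (n * (n + 1) / 2 + 2 * (j + 1) * n)
      = n + j + 1 + ((n + 1) * (n + 1 + 1) / 2 + 2 * j * (n + 1)) := by
    have h1 := aux_half n
    have h2 : 2 * (j + 1) * n = 2 * j * n + 2 * n := by ring
    have h3 : 2 * j * (n + 1) = 2 * j * n + 2 * j := by ring
    show _ = n + j + 1 + ((n + 1) * (n + 2) / 2 + 2 * j * (n + 1))
    omega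
  have hm : q ^ (3 * j + 2) * q ^ (n * (n + 1) / 2 + 2 * (j + 1) * n)
      = q ^ (n + j + 1) * q ^ ((n + 1) * (n + 1 + 1) / 2 + 2 * j * (n + 1)) := by
    rw [← pow_add, ← pow_add, he2]
  have hnum : q ^ (3 * j + 2) * ((-1 : ℂ) ^ n * q ^ (n * (n + 1) / 2 + 2 * (j + 1) * n))
      = -(q ^ (n + j + 1) * ((-1 : ℂ) ^ (n + 1) * q ^ ((n + 1) * (n + 1 + 1) / 2 + 2 * j * (n + 1)))) := by
    linear_combination ((-1 : ℂ)) ^ n * hm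
  unfold bb
  rw [prod_split j n]
  rw [← mul_div_assoc, ← mul_div_assoc, ← mul_div_assoc, mul_div_mul_left _ _ hne, hnum, neg_div]
end S9

namespace S9
variable {q : ℂ} (hq : ‖q‖ < 1)

lemma bb_zero (j : ℕ) : bb q j 0 = 1 := by unfold bb; simp

include hq in
lemma f_succ (j n : ℕ) :
    bb q j (n + 2) * (1 + q ^ (n + 2 + j)) = -(bb q j (n + 1) * q ^ (n + 2 + 2 * j)) := by
  rw [bb_succ j (n + 1)]
  rw [show (n + 1) + 1 + 2 * j = n + 2 + 2 * j by omega,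
      show j + 1 + (n + 1) = n + 2 + j by omega]
  rw [mul_assoc, div_mul_cancel₀]
  · ring
  · exact (by rw [show n + 2 + j = (n + 1 + j) + 1 by omega]; exact one_add_ne hq (n + 1 + j))

include hq in
lemma f_zero (j : ℕ) : bb q j 1 * (1 + q ^ (0 + 1 + j)) = -q ^ (2 * j + 1) := by
  have h := bb_succ (q := q) j 0
  rw [bb_zero] at h
  rw [h, show 0 + 1 + 2 * j = 2 * j + 1 by omega, show j + 1 + 0 = 0 + 1 + j by omega]
  rw [one_mul, div_mul_cancel₀]
  exact (by rw [show 0 + 1 + j = j + 1 by omega]; exact one_add_ne hq j)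

include hq in
lemma summable_f (j : ℕ) : Summable (fun n => bb q j (n + 1) * (1 + q ^ (n + 1 + j))) := by
  have hb1 : Summable (fun n => bb q j (n + 1)) :=
    (summable_nat_add_iff 1).2 (summable_bb hq j)
  apply Summable.of_norm_bounded (g := fun n => 2 * ‖bb q j (n + 1)‖) (hb1.norm.mul_left 2)
  intro n
  rw [norm_mul, mul_comm]
  apply mul_le_mul_of_nonneg_right _ (norm_nonneg _)
  calc ‖(1:ℂ) + q ^ (n + 1 + j)‖ ≤ ‖(1:ℂ)‖ + ‖q ^ (n + 1 + j)‖ := norm_add_le _ _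
    _ ≤ 1 + 1 := by
        rw [norm_one, norm_pow]
        have : ‖q‖ ^ (n + 1 + j) ≤ 1 := pow_le_one₀ (norm_nonneg q) hq.le
        linarith
    _ = 2 := by norm_num

include hq in
lemma key (j : ℕ) : BB q j = 1 - q ^ (2 * j + 1) + q ^ (3 * j + 2) * BB q (j + 1) := by
  have hb := summable_bb hq j
  have hb1 : Summable (fun n => bb q j (n + 1)) := (summable_nat_add_iff 1).2 hb
  have hs2 : Summable (fun n => q ^ (n + j + 1) * bb q j (n + 1)) := by
    apply Summable.of_norm_bounded (g := fun n => ‖bb q j (n + 1)‖) hb1.norm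
    intro n
    rw [norm_mul, norm_pow]
    calc ‖q‖ ^ (n + j + 1) * ‖bb q j (n + 1)‖ ≤ 1 * ‖bb q j (n + 1)‖ := by
          apply mul_le_mul_of_nonneg_right (pow_le_one₀ (norm_nonneg q) hq.le) (norm_nonneg _)
      _ = ‖bb q j (n + 1)‖ := one_mul _
  -- telescoping sum
  have hterm : ∀ n, bb q j (n + 1) + (1 + q ^ (j + 1)) * (q ^ (n + j + 1) * bb q j (n + 1))
      = (bb q j (n + 1) * (1 + q ^ (n + 1 + j)))
        - (bb q j (n + 1 + 1) * (1 + q ^ (n + 1 + 1 + j))) := by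
    intro n
    rw [show n + 1 + 1 = n + 2 by omega, show n + 2 + j = n + 2 + j from rfl]
    rw [f_succ hq j n]
    ring
  have hS : (∑' n, bb q j (n + 1)) + (1 + q ^ (j + 1)) * ∑' n, q ^ (n + j + 1) * bb q j (n + 1)
      = -q ^ (2 * j + 1) := by
    rw [← tsum_mul_left, ← Summable.tsum_add hb1 (hs2.mul_left _)]
    rw [tsum_congr hterm]
    rw [tsum_telescope (summable_f hq j)]
    exact f_zero hq j
  have hshift : q ^ (3 * j + 2) * BB q (j + 1)
      = -((1 + q ^ (j + 1)) * ∑' n, q ^ (n + j + 1) * bb q j (n + 1)) := by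
    unfold BB
    rw [← tsum_mul_left, tsum_congr (shift_eq hq j), tsum_neg, ← tsum_mul_left]
  have hsplit : BB q j = 1 + ∑' n, bb q j (n + 1) := by
    unfold BB
    rw [Summable.tsum_eq_zero_add hb, bb_zero]
  rw [hsplit, hshift]
  linear_combination hS

end S9

namespace S9
variable {q : ℂ} (hq : ‖q‖ < 1)

lemma le_pent (J : ℕ) : J ≤ J * (3 * J + 1) / 2 := by
  rw [Nat.le_div_iff_mul_le (by norm_num)]
  rcases Nat.eq_zero_or_pos J with h | h
  · simp [h]
  · exact Nat.mul_le_mul le_rfl (by omega)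

include hq in
lemma iter (J : ℕ) : BB q 0 = (∑ j ∈ Finset.range J, q ^ (j * (3 * j + 1) / 2) * (1 - q ^ (2 * j + 1)))
    + q ^ (J * (3 * J + 1) / 2) * BB q J := by
  induction J with
  | zero => simp
  | succ J ih =>
    rw [ih, Finset.sum_range_succ, key hq J]
    rw [aux_pent J, pow_add]
    ring

include hq in
lemma summable_mm : Summable (fun n : ℕ => ‖q‖ ^ (n * (n + 1) / 2) / (1 - ‖q‖) ^ n) := by
  apply summable_of_ratio_norm_eventually_le (r := 1/2) (by norm_num)
  have ht : Tendsto (fun n : ℕ => ‖q‖ ^ (n + 1)) atTop (𝓝 0) :=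
    (tendsto_pow_atTop_nhds_zero_of_lt_one (norm_nonneg q) hq).comp (tendsto_add_atTop_nat 1)
  have hev : ∀ᶠ n : ℕ in atTop, ‖q‖ ^ (n + 1) < (1 - ‖q‖) / 2 :=
    ht.eventually_lt_const (by linarith)
  filter_upwards [hev] with n hn
  have h1 : (0:ℝ) < 1 - ‖q‖ := by linarith
  have hmn : ∀ m : ℕ, (0:ℝ) ≤ ‖q‖ ^ (m * (m + 1) / 2) / (1 - ‖q‖) ^ m := by
    intro m; positivity
  rw [Real.norm_of_nonneg (hmn (n + 1)), Real.norm_of_nonneg (hmn n)]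
  have he : (n + 1) * (n + 1 + 1) / 2 = n * (n + 1) / 2 + (n + 1) := aux_half n
  rw [he, pow_add, pow_succ (1 - ‖q‖) n, ← div_mul_div_comm]
  have hstep : ‖q‖ ^ (n + 1) / (1 - ‖q‖) ≤ 1 / 2 := by
    rw [div_le_iff₀ h1]
    linarith
  calc ‖q‖ ^ (n * (n + 1) / 2) / (1 - ‖q‖) ^ n * (‖q‖ ^ (n + 1) / (1 - ‖q‖))
      ≤ ‖q‖ ^ (n * (n + 1) / 2) / (1 - ‖q‖) ^ n * (1 / 2) :=
        mul_le_mul_of_nonneg_left hstep (hmn n)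
    _ = 1 / 2 * (‖q‖ ^ (n * (n + 1) / 2) / (1 - ‖q‖) ^ n) := by ring

include hq in
lemma norm_BB_le (J : ℕ) : ‖BB q J‖ ≤ ∑' n : ℕ, ‖q‖ ^ (n * (n + 1) / 2) / (1 - ‖q‖) ^ n := by
  unfold BB
  calc ‖∑' n, bb q J n‖ ≤ ∑' n, ‖bb q J n‖ := norm_tsum_le_tsum_norm (summable_bb hq J).norm
    _ ≤ ∑' n : ℕ, ‖q‖ ^ (n * (n + 1) / 2) / (1 - ‖q‖) ^ n :=
        Summable.tsum_le_tsum (norm_bb_le hq J) (summable_bb hq J).norm (summable_mm hq)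

include hq in
lemma tail_tendsto : Tendsto (fun J => q ^ (J * (3 * J + 1) / 2) * BB q J) atTop (𝓝 0) := by
  set M := ∑' n : ℕ, ‖q‖ ^ (n * (n + 1) / 2) / (1 - ‖q‖) ^ n with hM
  have h1 : (0:ℝ) < 1 - ‖q‖ := by linarith
  have hM0 : 0 ≤ M := tsum_nonneg (fun n =>
    div_nonneg (pow_nonneg (norm_nonneg q) _) (pow_nonneg h1.le _))
  have hg : Tendsto (fun J : ℕ => ‖q‖ ^ J * M) atTop (𝓝 0) := by
    have := (tendsto_pow_atTop_nhds_zero_of_lt_one (norm_nonneg q) hq).mul_const M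
    simpa using this
  refine squeeze_zero_norm (fun J => ?_) hg
  rw [norm_mul, norm_pow]
  exact mul_le_mul (pow_le_pow_of_le_one (norm_nonneg q) hq.le (le_pent J))
    (norm_BB_le hq J) (norm_nonneg _) (pow_nonneg (norm_nonneg q) J)

include hq in
lemma summable_rhs : Summable (fun j : ℕ => q ^ (j * (3 * j + 1) / 2) * (1 - q ^ (2 * j + 1))) := by
  apply Summable.of_norm_bounded (g := fun j => 2 * ‖q‖ ^ j)
    ((summable_geometric_of_lt_one (norm_nonneg q) hq).mul_left 2)
  intro j
  rw [norm_mul, norm_pow]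
  have h1 : ‖q‖ ^ (j * (3 * j + 1) / 2) ≤ ‖q‖ ^ j :=
    pow_le_pow_of_le_one (norm_nonneg q) hq.le (le_pent j)
  have h2 : ‖(1:ℂ) - q ^ (2 * j + 1)‖ ≤ 2 := by
    calc ‖(1:ℂ) - q ^ (2 * j + 1)‖ ≤ ‖(1:ℂ)‖ + ‖q ^ (2 * j + 1)‖ := norm_sub_le _ _
      _ ≤ 1 + 1 := by
          rw [norm_one, norm_pow]
          have : ‖q‖ ^ (2 * j + 1) ≤ 1 := pow_le_one₀ (norm_nonneg q) hq.le
          linarith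
      _ = 2 := by norm_num
  calc ‖q‖ ^ (j * (3 * j + 1) / 2) * ‖(1:ℂ) - q ^ (2 * j + 1)‖
      ≤ ‖q‖ ^ j * 2 := mul_le_mul h1 h2 (norm_nonneg _) (by positivity)
    _ = 2 * ‖q‖ ^ j := mul_comm _ _

include hq in
lemma BB_eq_rhs : BB q 0 = ∑' j : ℕ, q ^ (j * (3 * j + 1) / 2) * (1 - q ^ (2 * j + 1)) := by
  have h1 : Tendsto (fun J => ∑ j ∈ Finset.range J, q ^ (j * (3 * j + 1) / 2) * (1 - q ^ (2 * j + 1)))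
      atTop (𝓝 (∑' j : ℕ, q ^ (j * (3 * j + 1) / 2) * (1 - q ^ (2 * j + 1)))) :=
    (summable_rhs hq).hasSum.tendsto_sum_nat
  have h2 : Tendsto (fun J => ∑ j ∈ Finset.range J, q ^ (j * (3 * j + 1) / 2) * (1 - q ^ (2 * j + 1)))
      atTop (𝓝 (BB q 0)) := by
    have heq : ∀ J, ∑ j ∈ Finset.range J, q ^ (j * (3 * j + 1) / 2) * (1 - q ^ (2 * j + 1))
        = BB q 0 - q ^ (J * (3 * J + 1) / 2) * BB q J := by
      intro J
      rw [iter hq J]; ring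
    simp only [heq]
    simpa using tendsto_const_nhds.sub (tail_tendsto hq)
  exact tendsto_nhds_unique h2 h1

end S9

theorem stmt_9 (q : ℂ) (hq : ‖q‖ < 1) :
    ∑' n : ℕ, (-1) ^ n * q ^ (n * (n + 1) / 2) / qPoch (-q) q n
      = ∑' j : ℕ, q ^ (j * (3 * j + 1) / 2) * (1 - q ^ (2 * j + 1)) := by
  rw [← S9.BB_eq_rhs hq]
  unfold S9.BB
  apply tsum_congr
  intro n
  unfold S9.bb qPoch
  congr 1
  · rw [show n * (n + 1) / 2 + 2 * 0 * n = n * (n + 1) / 2 by simp]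
  · apply Finset.prod_congr rfl
    intro i _
    rw [show 0 + 1 + i = i + 1 by omega, pow_succ]
    ring
end

section
/- For all complex q with |q| < 1, the sum over n ≥ 0 of q^{n(2n+1)} / (-q;q)_{2n+1} equals the sum over j ≥ 0 of q^{j(3j+1)/2} (1 - q^{2j+1}). -/
set_option maxHeartbeats 1000000
open Filter Topology Finset

namespace RLN

def ef : ℕ → ℕ
  | 0 => 0
  | n+1 => ef n + n

def eg : ℕ → ℕ
  | 0 => 0
  | n+1 => eg n + (3*n+1)

lemma ef_succ (n : ℕ) : ef (n+1) = ef n + n := rfl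
lemma eg_succ (n : ℕ) : eg (n+1) = eg n + (3*n+1) := rfl

variable {q t : ℂ}

noncomputable def Pq (q : ℂ) (n : ℕ) : ℂ := qPoch (-q) q n

lemma Pq_zero : Pq q 0 = 1 := by simp [Pq, qPoch]

lemma Pq_succ (n : ℕ) : Pq q (n+1) = Pq q n * (1 + q^(n+1)) := by
  rw [Pq, qPoch, Finset.prod_range_succ]
  rw [Pq, qPoch]
  ring

lemma norm_one_add_ge (z : ℂ) : 1 - ‖z‖ ≤ ‖1 + z‖ := by
  have h := norm_add_le (1 + z) (-z)
  rw [add_neg_cancel_right, norm_one, norm_neg] at h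
  linarith

lemma norm_one_add_le (z : ℂ) : ‖1 + z‖ ≤ 1 + ‖z‖ := by
  simpa using norm_add_le 1 z

lemma qpow_le (hq : ‖q‖ < 1) (n : ℕ) : ‖q^(n+1)‖ ≤ ‖q‖ := by
  rw [norm_pow]
  calc ‖q‖^(n+1) ≤ ‖q‖^1 := pow_le_pow_of_le_one (norm_nonneg q) hq.le (by omega)
    _ = ‖q‖ := pow_one _

lemma qpow_le_one (hq : ‖q‖ < 1) (n : ℕ) : ‖q^n‖ ≤ 1 := by
  rw [norm_pow]; exact pow_le_one₀ (norm_nonneg q) hq.le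

lemma norm_one_add_qpow_le_two (hq : ‖q‖ < 1) (n : ℕ) : ‖(1:ℂ) + q^n‖ ≤ 2 := by
  calc ‖(1:ℂ) + q^n‖ ≤ 1 + ‖q^n‖ := norm_one_add_le _
    _ ≤ 2 := by linarith [qpow_le_one hq n]

lemma norm_Pq_ge (hq : ‖q‖ < 1) (n : ℕ) : (1 - ‖q‖)^n ≤ ‖Pq q n‖ := by
  induction n with
  | zero => simp [Pq_zero]
  | succ m ih =>
    rw [Pq_succ, norm_mul, pow_succ]
    have h1 : 1 - ‖q‖ ≤ ‖1 + q^(m+1)‖ := by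
      calc 1 - ‖q‖ ≤ 1 - ‖q^(m+1)‖ := by linarith [qpow_le hq m]
        _ ≤ _ := norm_one_add_ge _
    exact mul_le_mul ih h1 (by linarith [norm_nonneg q, hq]) (norm_nonneg _)

lemma Pq_ne_zero (hq : ‖q‖ < 1) (n : ℕ) : Pq q n ≠ 0 := by
  have h := norm_Pq_ge hq n
  have : (0:ℝ) < (1 - ‖q‖)^n := pow_pos (by linarith) n
  intro h0
  rw [h0, norm_zero] at h
  linarith

lemma one_add_qpow_ne_zero (hq : ‖q‖ < 1) (n : ℕ) : (1:ℂ) + q^(n+1) ≠ 0 := by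
  intro h0
  have := norm_one_add_ge (q^(n+1))
  rw [h0, norm_zero] at this
  linarith [qpow_le hq n]

lemma norm_qPoch_neg_le (hq : ‖q‖ < 1) (ht : ‖t‖ ≤ 1) (n : ℕ) :
    ‖qPoch (-t) q n‖ ≤ 2^n := by
  rw [qPoch]
  calc ‖∏ i ∈ Finset.range n, (1 - (-t) * q ^ i)‖
      = ∏ i ∈ Finset.range n, ‖1 - (-t) * q ^ i‖ := norm_prod _ _
    _ ≤ ∏ _i ∈ Finset.range n, 2 := by
        apply Finset.prod_le_prod (fun i _ => norm_nonneg _)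
        intro i _
        have h : (1 : ℂ) - (-t) * q^i = 1 + t * q^i := by ring
        rw [h]
        calc ‖1 + t * q^i‖ ≤ 1 + ‖t * q^i‖ := norm_one_add_le _
          _ ≤ 2 := by
              rw [norm_mul]
              nlinarith [norm_nonneg t, qpow_le_one hq i, norm_nonneg (q^i)]
    _ = 2^n := by simp

lemma qPoch_succ (a : ℂ) (n : ℕ) : qPoch a q (n+1) = qPoch a q n * (1 - a * q^n) :=
  Finset.prod_range_succ _ _

lemma qPoch_succ' (n : ℕ) :
    (1 + t) * qPoch (-(t*q)) q n = qPoch (-t) q (n+1) := by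
  rw [qPoch, qPoch, Finset.prod_range_succ']
  have h : ∀ i ∈ Finset.range n, (1 - (-t) * q ^ (i+1)) = (1 - (-(t*q)) * q ^ i) := by
    intro i _; ring
  rw [Finset.prod_congr rfl h]
  simp [mul_comm]

/-! ### summability machinery -/

lemma summable_KX {K x : ℝ} (hK : 0 ≤ K) (hx0 : 0 ≤ x) (hx1 : x < 1)
    {e : ℕ → ℕ} (he : ∀ n, e n + n ≤ e (n+1)) :
    Summable (fun n => K^n * x^(e n)) := by
  apply summable_of_ratio_norm_eventually_le (r := 1/2) (by norm_num)
  have h0 : Filter.Tendsto (fun n : ℕ => K * x^n) atTop (nhds 0) := by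
    simpa using (tendsto_pow_atTop_nhds_zero_of_lt_one hx0 hx1).const_mul K
  have h1 : ∀ᶠ n : ℕ in atTop, K * x^n ≤ 1/2 := by
    filter_upwards [h0.eventually (eventually_le_nhds (by norm_num : (0:ℝ) < 1/2))]
      with n hn using hn
  filter_upwards [h1] with n hn
  have hb : x^(e (n+1)) ≤ x^(e n + n) := pow_le_pow_of_le_one hx0 hx1.le (he n)
  have hnn : (0:ℝ) ≤ K^n * x^(e n) := by positivity
  rw [Real.norm_of_nonneg (by positivity), Real.norm_of_nonneg hnn]
  calc K^(n+1) * x^(e (n+1)) ≤ K^(n+1) * x^(e n + n) := by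
        apply mul_le_mul_of_nonneg_left hb (by positivity)
    _ = (K * x^n) * (K^n * x^(e n)) := by ring
    _ ≤ (1/2) * (K^n * x^(e n)) := mul_le_mul_of_nonneg_right hn hnn

/-! ### the two series -/

noncomputable def fa (q t : ℂ) (n : ℕ) : ℂ := (-1)^n * t^n * q^(ef n) / Pq q n
noncomputable def xf (q t : ℂ) (n : ℕ) : ℂ := (-1)^n * t^n * q^(ef n) * (1+q^n) / Pq q n
noncomputable def pu (q t : ℂ) (n : ℕ) : ℂ :=
  t^n * q^(eg n) * qPoch (-t) q n * (1 - t*q^(2*n)) / Pq q n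
noncomputable def xw (q t : ℂ) (n : ℕ) : ℂ :=
  t^n * q^(eg n) * (1+q^n) * qPoch (-t) q n / Pq q n

noncomputable def Ff (q t : ℂ) : ℂ := ∑' n, fa q t n
noncomputable def PP (q t : ℂ) : ℂ := ∑' n, pu q t n

lemma norm_div_Pq_le (hq : ‖q‖ < 1) (n : ℕ) (z : ℂ) :
    ‖z / Pq q n‖ ≤ ‖z‖ * ((1-‖q‖)⁻¹)^n := by
  rw [norm_div, div_eq_mul_inv]
  apply mul_le_mul_of_nonneg_left ?_ (norm_nonneg z)
  rw [inv_pow]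
  exact inv_anti₀ (pow_pos (by linarith) n) (norm_Pq_ge hq n)

lemma norm_fa_le (hq : ‖q‖ < 1) (n : ℕ) :
    ‖fa q t n‖ ≤ ‖t‖^n * (((1-‖q‖)⁻¹)^n * ‖q‖^(ef n)) := by
  have h := norm_div_Pq_le hq n ((-1:ℂ)^n * t^n * q^(ef n))
  rw [fa]
  calc ‖((-1:ℂ))^n * t^n * q^(ef n) / Pq q n‖
      ≤ ‖(-1:ℂ)^n * t^n * q^(ef n)‖ * ((1-‖q‖)⁻¹)^n := h
    _ = ‖t‖^n * (((1-‖q‖)⁻¹)^n * ‖q‖^(ef n)) := by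
        simp [norm_mul, norm_pow]; ring

lemma norm_xf_le (hq : ‖q‖ < 1) (n : ℕ) :
    ‖xf q t n‖ ≤ ‖t‖^n * (2 * (((1-‖q‖)⁻¹)^n * ‖q‖^(ef n))) := by
  have h := norm_div_Pq_le hq n ((-1:ℂ)^n * t^n * q^(ef n) * (1+q^n))
  rw [xf]
  refine h.trans ?_
  have h2 : ‖(-1:ℂ)^n * t^n * q^(ef n) * (1+q^n)‖ ≤ ‖t‖^n * ‖q‖^(ef n) * 2 := by
    rw [norm_mul]
    have : ‖(-1:ℂ)^n * t^n * q^(ef n)‖ = ‖t‖^n * ‖q‖^(ef n) := by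
      simp [norm_mul, norm_pow]
    rw [this]
    exact mul_le_mul_of_nonneg_left (norm_one_add_qpow_le_two hq n) (by positivity)
  calc ‖(-1:ℂ)^n * t^n * q^(ef n) * (1+q^n)‖ * ((1-‖q‖)⁻¹)^n
      ≤ (‖t‖^n * ‖q‖^(ef n) * 2) * ((1-‖q‖)⁻¹)^n := by
        exact mul_le_mul_of_nonneg_right h2 (pow_nonneg (inv_nonneg.2 (by linarith)) n)
    _ = ‖t‖^n * (2 * (((1-‖q‖)⁻¹)^n * ‖q‖^(ef n))) := by ring

lemma norm_pu_le (hq : ‖q‖ < 1) (ht : ‖t‖ ≤ 1) (n : ℕ) :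
    ‖pu q t n‖ ≤ ‖t‖^n * (2 * ((2*(1-‖q‖)⁻¹)^n * ‖q‖^(eg n))) := by
  have h := norm_div_Pq_le hq n (t^n * q^(eg n) * qPoch (-t) q n * (1 - t*q^(2*n)))
  rw [pu]
  refine h.trans ?_
  have hc : ‖(1:ℂ) - t*q^(2*n)‖ ≤ 2 := by
    calc ‖(1:ℂ) - t*q^(2*n)‖ ≤ ‖(1:ℂ)‖ + ‖t*q^(2*n)‖ := norm_sub_le _ _
      _ ≤ 2 := by
          rw [norm_one, norm_mul]
          nlinarith [norm_nonneg t, qpow_le_one hq (2*n), norm_nonneg (q^(2*n))]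
  have h2 : ‖t^n * q^(eg n) * qPoch (-t) q n * (1 - t*q^(2*n))‖
      ≤ ‖t‖^n * ‖q‖^(eg n) * 2^n * 2 := by
    rw [norm_mul, norm_mul, norm_mul, norm_pow, norm_pow]
    have hR := norm_qPoch_neg_le hq ht n
    have hh : ‖t‖^n * ‖q‖^(eg n) * ‖qPoch (-t) q n‖ ≤ ‖t‖^n * ‖q‖^(eg n) * 2^n :=
      mul_le_mul_of_nonneg_left hR (by positivity)
    calc ‖t‖^n * ‖q‖^(eg n) * ‖qPoch (-t) q n‖ * ‖1 - t*q^(2*n)‖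
        ≤ ‖t‖^n * ‖q‖^(eg n) * ‖qPoch (-t) q n‖ * 2 :=
          mul_le_mul_of_nonneg_left hc (by positivity)
      _ ≤ ‖t‖^n * ‖q‖^(eg n) * 2^n * 2 := by
          apply mul_le_mul_of_nonneg_right hh (by norm_num)
  calc ‖t^n * q^(eg n) * qPoch (-t) q n * (1 - t*q^(2*n))‖ * ((1-‖q‖)⁻¹)^n
      ≤ (‖t‖^n * ‖q‖^(eg n) * 2^n * 2) * ((1-‖q‖)⁻¹)^n := by
        exact mul_le_mul_of_nonneg_right h2 (pow_nonneg (inv_nonneg.2 (by linarith)) n)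
    _ = ‖t‖^n * (2 * ((2*(1-‖q‖)⁻¹)^n * ‖q‖^(eg n))) := by
        rw [mul_pow]; ring

lemma norm_xw_le (hq : ‖q‖ < 1) (ht : ‖t‖ ≤ 1) (n : ℕ) :
    ‖xw q t n‖ ≤ ‖t‖^n * (2 * ((2*(1-‖q‖)⁻¹)^n * ‖q‖^(eg n))) := by
  have h := norm_div_Pq_le hq n (t^n * q^(eg n) * (1+q^n) * qPoch (-t) q n)
  rw [xw]
  refine h.trans ?_
  have h2 : ‖t^n * q^(eg n) * (1+q^n) * qPoch (-t) q n‖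
      ≤ ‖t‖^n * ‖q‖^(eg n) * 2 * 2^n := by
    rw [norm_mul, norm_mul, norm_mul, norm_pow, norm_pow]
    have hR := norm_qPoch_neg_le hq ht n
    have hh : ‖t‖^n * ‖q‖^(eg n) * ‖(1:ℂ)+q^n‖ ≤ ‖t‖^n * ‖q‖^(eg n) * 2 :=
      mul_le_mul_of_nonneg_left (norm_one_add_qpow_le_two hq n) (by positivity)
    calc ‖t‖^n * ‖q‖^(eg n) * ‖(1:ℂ)+q^n‖ * ‖qPoch (-t) q n‖
        ≤ (‖t‖^n * ‖q‖^(eg n) * 2) * ‖qPoch (-t) q n‖ :=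
          mul_le_mul_of_nonneg_right hh (norm_nonneg _)
      _ ≤ ‖t‖^n * ‖q‖^(eg n) * 2 * 2^n :=
          mul_le_mul_of_nonneg_left hR (by positivity)
  calc ‖t^n * q^(eg n) * (1+q^n) * qPoch (-t) q n‖ * ((1-‖q‖)⁻¹)^n
      ≤ (‖t‖^n * ‖q‖^(eg n) * 2 * 2^n) * ((1-‖q‖)⁻¹)^n := by
        exact mul_le_mul_of_nonneg_right h2 (pow_nonneg (inv_nonneg.2 (by linarith)) n)
    _ = ‖t‖^n * (2 * ((2*(1-‖q‖)⁻¹)^n * ‖q‖^(eg n))) := by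
        rw [mul_pow]; ring

/-! ### summability corollaries -/

lemma ef_growth : ∀ n, ef n + n ≤ ef (n+1) := fun n => le_of_eq (by rw [ef_succ])
lemma eg_growth : ∀ n, eg n + n ≤ eg (n+1) := fun n => by rw [eg_succ]; omega

lemma one_sub_norm_pos (hq : ‖q‖ < 1) : (0:ℝ) < 1 - ‖q‖ := by linarith

lemma summable_majf (hq : ‖q‖ < 1) :
    Summable (fun n => ((1-‖q‖)⁻¹)^n * ‖q‖^(ef n)) :=
  summable_KX (inv_nonneg.2 (one_sub_norm_pos hq).le) (norm_nonneg q) hq ef_growth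

lemma summable_majg (hq : ‖q‖ < 1) :
    Summable (fun n => (2*(1-‖q‖)⁻¹)^n * ‖q‖^(eg n)) :=
  summable_KX (by nlinarith [inv_nonneg.2 (one_sub_norm_pos hq).le]) (norm_nonneg q) hq eg_growth

lemma summable_norm_fa (hq : ‖q‖ < 1) (ht : ‖t‖ ≤ 1) :
    Summable (fun n => ‖fa q t n‖) := by
  have hb : ∀ n, ‖fa q t n‖ ≤ ((1-‖q‖)⁻¹)^n * ‖q‖^(ef n) := by
    intro n
    refine (norm_fa_le hq n).trans ?_
    have h1 : ‖t‖^n ≤ 1 := pow_le_one₀ (norm_nonneg t) ht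
    have h2 : (0:ℝ) ≤ ((1-‖q‖)⁻¹)^n * ‖q‖^(ef n) :=
      mul_nonneg (pow_nonneg (inv_nonneg.2 (one_sub_norm_pos hq).le) n) (pow_nonneg (norm_nonneg q) _)
    nlinarith
  exact Summable.of_nonneg_of_le (fun n => norm_nonneg _) hb (summable_majf hq)

lemma summable_fa (hq : ‖q‖ < 1) (ht : ‖t‖ ≤ 1) : Summable (fa q t) :=
  (summable_norm_fa hq ht).of_norm

lemma summable_norm_pu (hq : ‖q‖ < 1) (ht : ‖t‖ ≤ 1) :
    Summable (fun n => ‖pu q t n‖) := by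
  have hb : ∀ n, ‖pu q t n‖ ≤ 2 * ((2*(1-‖q‖)⁻¹)^n * ‖q‖^(eg n)) := by
    intro n
    refine (norm_pu_le hq ht n).trans ?_
    have h1 : ‖t‖^n ≤ 1 := pow_le_one₀ (norm_nonneg t) ht
    have h2 : (0:ℝ) ≤ (2*(1-‖q‖)⁻¹)^n * ‖q‖^(eg n) :=
      mul_nonneg (pow_nonneg (by nlinarith [inv_nonneg.2 (one_sub_norm_pos hq).le]) n)
        (pow_nonneg (norm_nonneg q) _)
    nlinarith
  exact Summable.of_nonneg_of_le (fun n => norm_nonneg _) hb ((summable_majg hq).mul_left 2)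

lemma summable_pu (hq : ‖q‖ < 1) (ht : ‖t‖ ≤ 1) : Summable (pu q t) :=
  (summable_norm_pu hq ht).of_norm

lemma summable_xf (hq : ‖q‖ < 1) (ht : ‖t‖ ≤ 1) : Summable (xf q t) := by
  apply Summable.of_norm
  have hb : ∀ n, ‖xf q t n‖ ≤ 2 * (((1-‖q‖)⁻¹)^n * ‖q‖^(ef n)) := by
    intro n
    refine (norm_xf_le hq n).trans ?_
    have h1 : ‖t‖^n ≤ 1 := pow_le_one₀ (norm_nonneg t) ht
    have h2 : (0:ℝ) ≤ ((1-‖q‖)⁻¹)^n * ‖q‖^(ef n) :=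
      mul_nonneg (pow_nonneg (inv_nonneg.2 (one_sub_norm_pos hq).le) n) (pow_nonneg (norm_nonneg q) _)
    nlinarith
  exact Summable.of_nonneg_of_le (fun n => norm_nonneg _) hb ((summable_majf hq).mul_left 2)

lemma summable_xw (hq : ‖q‖ < 1) (ht : ‖t‖ ≤ 1) : Summable (xw q t) := by
  apply Summable.of_norm
  have hb : ∀ n, ‖xw q t n‖ ≤ 2 * ((2*(1-‖q‖)⁻¹)^n * ‖q‖^(eg n)) := by
    intro n
    refine (norm_xw_le hq ht n).trans ?_
    have h1 : ‖t‖^n ≤ 1 := pow_le_one₀ (norm_nonneg t) ht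
    have h2 : (0:ℝ) ≤ (2*(1-‖q‖)⁻¹)^n * ‖q‖^(eg n) :=
      mul_nonneg (pow_nonneg (by nlinarith [inv_nonneg.2 (one_sub_norm_pos hq).le]) n)
        (pow_nonneg (norm_nonneg q) _)
    nlinarith
  exact Summable.of_nonneg_of_le (fun n => norm_nonneg _) hb ((summable_majg hq).mul_left 2)

lemma tendsto_xf (hq : ‖q‖ < 1) (ht : ‖t‖ ≤ 1) :
    Filter.Tendsto (xf q t) atTop (nhds 0) :=
  (summable_xf hq ht).tendsto_atTop_zero

lemma tendsto_xw (hq : ‖q‖ < 1) (ht : ‖t‖ ≤ 1) :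
    Filter.Tendsto (xw q t) atTop (nhds 0) :=
  (summable_xw hq ht).tendsto_atTop_zero

/-! ### telescoping -/

lemma tsum_telescope {x : ℕ → ℂ} (hs : Summable fun n => x n - x (n+1))
    (hx : Filter.Tendsto x atTop (nhds 0)) : ∑' n, (x n - x (n+1)) = x 0 := by
  have h1 := hs.hasSum.tendsto_sum_nat
  have h2 : Filter.Tendsto (fun N => x 0 - x N) atTop (nhds (x 0)) := by
    simpa using tendsto_const_nhds.sub hx
  have h3 : (fun N => ∑ i ∈ Finset.range N, (x i - x (i+1))) = fun N => x 0 - x N := by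
    funext N; exact Finset.sum_range_sub' x N
  rw [h3] at h1
  exact tendsto_nhds_unique h1 h2

/-! ### per-term identities -/

lemma term_f (hq : ‖q‖ < 1) (n : ℕ) :
    fa q t n + (1+t) * fa q (t*q) n = xf q t n - xf q t (n+1) := by
  have h1 := Pq_ne_zero hq n
  have h2 := one_add_qpow_ne_zero hq n
  simp only [fa, xf, Pq_succ, ef_succ]
  field_simp
  ring

lemma term_P (hq : ‖q‖ < 1) (ht1 : (1:ℂ) + t ≠ 0) (n : ℕ) :
    pu q t n + (1+t) * pu q (t*q) n = xw q t n - xw q t (n+1) := by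
  have h1 := Pq_ne_zero hq n
  have h2 := one_add_qpow_ne_zero hq n
  have hR1 : qPoch (-t) q (n+1) = qPoch (-t) q n * (1 + t * q^n) := by
    rw [qPoch_succ]; ring
  have hB : qPoch (-(t*q)) q n = qPoch (-t) q n * (1 + t * q^n) / (1+t) := by
    rw [eq_div_iff ht1]
    rw [mul_comm _ (1+t), qPoch_succ', hR1]
  simp only [pu, xw, Pq_succ, eg_succ, hR1, hB]
  field_simp
  ring

/-! ### functional equations -/

lemma xf_zero : xf q t 0 = 2 := by
  simp [xf, ef, Pq_zero]
  norm_num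

lemma xw_zero : xw q t 0 = 2 := by
  simp [xw, eg, Pq_zero, qPoch]
  norm_num

lemma funeq_f (hq : ‖q‖ < 1) (ht : ‖t‖ ≤ 1) :
    Ff q t + (1+t) * Ff q (t*q) = 2 := by
  have htq : ‖t*q‖ ≤ 1 := by
    rw [norm_mul]
    nlinarith [norm_nonneg t, norm_nonneg q]
  have hs1 := summable_fa hq ht
  have hs2 := (summable_fa hq htq).mul_left (1+t)
  rw [Ff, Ff, ← tsum_mul_left, ← Summable.tsum_add hs1 hs2]
  have hsum : Summable (fun n => xf q t n - xf q t (n+1)) := by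
    apply Summable.congr (hs1.add hs2)
    intro n
    exact term_f hq n
  calc (∑' n, (fa q t n + (1+t) * fa q (t*q) n))
      = ∑' n, (xf q t n - xf q t (n+1)) := tsum_congr (fun n => term_f hq n)
    _ = xf q t 0 := tsum_telescope hsum (tendsto_xf hq ht)
    _ = 2 := xf_zero

lemma funeq_P (hq : ‖q‖ < 1) (ht : ‖t‖ ≤ 1) (ht1 : (1:ℂ) + t ≠ 0) :
    PP q t + (1+t) * PP q (t*q) = 2 := by
  have htq : ‖t*q‖ ≤ 1 := by
    rw [norm_mul]
    nlinarith [norm_nonneg t, norm_nonneg q]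
  have hs1 := summable_pu hq ht
  have hs2 := (summable_pu hq htq).mul_left (1+t)
  rw [PP, PP, ← tsum_mul_left, ← Summable.tsum_add hs1 hs2]
  have hsum : Summable (fun n => xw q t n - xw q t (n+1)) := by
    apply Summable.congr (hs1.add hs2)
    intro n
    exact term_P hq ht1 n
  calc (∑' n, (pu q t n + (1+t) * pu q (t*q) n))
      = ∑' n, (xw q t n - xw q t (n+1)) := tsum_congr (fun n => term_P hq ht1 n)
    _ = xw q t 0 := tsum_telescope hsum (tendsto_xw hq ht)
    _ = 2 := xw_zero


/-! ### tail bounds -/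

lemma fa_zero : fa q t 0 = 1 := by simp [fa, ef, Pq_zero]

lemma pu_zero : pu q t 0 = 1 - t := by simp [pu, eg, Pq_zero, qPoch]

noncomputable def Cf (q : ℂ) : ℝ := ∑' n : ℕ, ((1-‖q‖)⁻¹)^(n+1) * ‖q‖^(ef (n+1))
noncomputable def Cg (q : ℂ) : ℝ := ∑' n : ℕ, 2 * ((2*(1-‖q‖)⁻¹)^(n+1) * ‖q‖^(eg (n+1)))

lemma Cf_nonneg (hq : ‖q‖ < 1) : 0 ≤ Cf q := by
  apply tsum_nonneg
  intro n
  have := one_sub_norm_pos hq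
  positivity

lemma Cg_nonneg (hq : ‖q‖ < 1) : 0 ≤ Cg q := by
  apply tsum_nonneg
  intro n
  have h0 : (0:ℝ) ≤ 2*(1-‖q‖)⁻¹ := by nlinarith [inv_nonneg.2 (one_sub_norm_pos hq).le]
  positivity

lemma Ff_tail (hq : ‖q‖ < 1) (ht : ‖t‖ ≤ 1) : ‖Ff q t - 1‖ ≤ ‖t‖ * Cf q := by
  have hs := summable_fa hq ht
  have h0 : Ff q t - 1 = ∑' n, fa q t (n+1) := by
    rw [Ff, Summable.tsum_eq_zero_add hs, fa_zero]
    ring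
  have hsn : Summable (fun n => ‖fa q t (n+1)‖) :=
    (summable_nat_add_iff 1).mpr (summable_norm_fa hq ht)
  have hmaj : Summable (fun n => ‖t‖ * (((1-‖q‖)⁻¹)^(n+1) * ‖q‖^(ef (n+1)))) :=
    (((summable_nat_add_iff 1).mpr (summable_majf hq))).mul_left _
  have hb : ∀ n : ℕ, ‖fa q t (n+1)‖ ≤ ‖t‖ * (((1-‖q‖)⁻¹)^(n+1) * ‖q‖^(ef (n+1))) := by
    intro n
    refine (norm_fa_le hq (n+1)).trans ?_
    have h1 : ‖t‖^(n+1) ≤ ‖t‖ := pow_le_of_le_one (norm_nonneg t) ht (by omega)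
    have h2 : (0:ℝ) ≤ ((1-‖q‖)⁻¹)^(n+1) * ‖q‖^(ef (n+1)) :=
      mul_nonneg (pow_nonneg (inv_nonneg.2 (one_sub_norm_pos hq).le) _) (pow_nonneg (norm_nonneg q) _)
    exact mul_le_mul_of_nonneg_right h1 h2
  rw [h0]
  calc ‖∑' n, fa q t (n+1)‖ ≤ ∑' n, ‖fa q t (n+1)‖ := norm_tsum_le_tsum_norm hsn
    _ ≤ ∑' n, ‖t‖ * (((1-‖q‖)⁻¹)^(n+1) * ‖q‖^(ef (n+1))) := Summable.tsum_le_tsum hb hsn hmaj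
    _ = ‖t‖ * Cf q := by rw [Cf, tsum_mul_left]

lemma PP_tail (hq : ‖q‖ < 1) (ht : ‖t‖ ≤ 1) : ‖PP q t - 1‖ ≤ ‖t‖ * (1 + Cg q) := by
  have hs := summable_pu hq ht
  have h0 : PP q t - 1 = -t + ∑' n, pu q t (n+1) := by
    rw [PP, Summable.tsum_eq_zero_add hs, pu_zero]
    ring
  have hsn : Summable (fun n => ‖pu q t (n+1)‖) :=
    (summable_nat_add_iff 1).mpr (summable_norm_pu hq ht)
  have hmaj : Summable (fun n => ‖t‖ * (2 * ((2*(1-‖q‖)⁻¹)^(n+1) * ‖q‖^(eg (n+1))))) :=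
    (((summable_nat_add_iff 1).mpr (summable_majg hq)).mul_left 2).mul_left _
  have hb : ∀ n : ℕ, ‖pu q t (n+1)‖ ≤ ‖t‖ * (2 * ((2*(1-‖q‖)⁻¹)^(n+1) * ‖q‖^(eg (n+1)))) := by
    intro n
    refine (norm_pu_le hq ht (n+1)).trans ?_
    have h1 : ‖t‖^(n+1) ≤ ‖t‖ := pow_le_of_le_one (norm_nonneg t) ht (by omega)
    have h2 : (0:ℝ) ≤ 2 * ((2*(1-‖q‖)⁻¹)^(n+1) * ‖q‖^(eg (n+1))) := by
      have h0' : (0:ℝ) ≤ 2*(1-‖q‖)⁻¹ := by nlinarith [inv_nonneg.2 (one_sub_norm_pos hq).le]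
      positivity
    exact mul_le_mul_of_nonneg_right h1 h2
  rw [h0]
  have hmaj' : Summable (fun n : ℕ => 2 * ((2*(1-‖q‖)⁻¹)^(n+1) * ‖q‖^(eg (n+1)))) :=
    ((summable_nat_add_iff 1).mpr (summable_majg hq)).mul_left 2
  calc ‖-t + ∑' n, pu q t (n+1)‖ ≤ ‖-t‖ + ‖∑' n, pu q t (n+1)‖ := norm_add_le _ _
    _ ≤ ‖t‖ + ∑' n, ‖pu q t (n+1)‖ := by
        rw [norm_neg]
        exact add_le_add_right (norm_tsum_le_tsum_norm hsn) _
    _ ≤ ‖t‖ + ∑' n, ‖t‖ * (2 * ((2*(1-‖q‖)⁻¹)^(n+1) * ‖q‖^(eg (n+1)))) := by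
        exact add_le_add_right (Summable.tsum_le_tsum hb hsn hmaj) _
    _ = ‖t‖ * (1 + Cg q) := by rw [tsum_mul_left, Cg]; ring

lemma diff_le (hq : ‖q‖ < 1) (ht : ‖t‖ ≤ 1) :
    ‖Ff q t - PP q t‖ ≤ ‖t‖ * (Cf q + (1 + Cg q)) := by
  have h : Ff q t - PP q t = (Ff q t - 1) - (PP q t - 1) := by ring
  rw [h]
  calc ‖(Ff q t - 1) - (PP q t - 1)‖ ≤ ‖Ff q t - 1‖ + ‖PP q t - 1‖ := norm_sub_le _ _
    _ ≤ ‖t‖ * Cf q + ‖t‖ * (1 + Cg q) := add_le_add (Ff_tail hq ht) (PP_tail hq ht)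
    _ = ‖t‖ * (Cf q + (1 + Cg q)) := by ring

/-! ### iteration -/

lemma iterate_diff (hq : ‖q‖ < 1) (K : ℕ) :
    Ff q q - PP q q
      = (∏ k ∈ Finset.range K, (-(1 + q^(k+1)))) * (Ff q (q^(K+1)) - PP q (q^(K+1))) := by
  induction K with
  | zero => simp
  | succ m ih =>
    have ht : ‖q^(m+1)‖ ≤ 1 := (qpow_le hq m).trans hq.le
    have ht1 : (1:ℂ) + q^(m+1) ≠ 0 := one_add_qpow_ne_zero hq m
    have hf := funeq_f hq ht
    have hp := funeq_P hq ht ht1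
    have hstep : Ff q (q^(m+1)) - PP q (q^(m+1))
        = (-(1 + q^(m+1))) * (Ff q (q^(m+2)) - PP q (q^(m+2))) := by
      have hqq : q^(m+1) * q = q^(m+2) := by rw [← pow_succ]
      rw [← hqq]
      linear_combination hf - hp
    rw [ih, hstep, Finset.prod_range_succ]
    ring

lemma prod_norm_le (hq : ‖q‖ < 1) (K : ℕ) :
    ‖∏ k ∈ Finset.range K, (-(1 + q^(k+1)))‖ ≤ Real.exp ((1-‖q‖)⁻¹) := by
  rw [norm_prod]
  have h1 : ∀ k ∈ Finset.range K, ‖-(1 + q^(k+1))‖ ≤ Real.exp (‖q‖^(k+1)) := by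
    intro k _
    rw [norm_neg]
    calc ‖(1:ℂ) + q^(k+1)‖ ≤ 1 + ‖q^(k+1)‖ := norm_one_add_le _
      _ = ‖q‖^(k+1) + 1 := by rw [norm_pow]; ring
      _ ≤ Real.exp (‖q‖^(k+1)) := Real.add_one_le_exp _
  calc ∏ k ∈ Finset.range K, ‖-(1 + q^(k+1))‖
      ≤ ∏ k ∈ Finset.range K, Real.exp (‖q‖^(k+1)) :=
        Finset.prod_le_prod (fun k _ => norm_nonneg _) h1
    _ = Real.exp (∑ k ∈ Finset.range K, ‖q‖^(k+1)) := by rw [Real.exp_sum]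
    _ ≤ Real.exp ((1-‖q‖)⁻¹) := by
        apply Real.exp_le_exp.2
        have hterm : ∀ k ∈ Finset.range K, ‖q‖^(k+1) ≤ ‖q‖^k := by
          intro k _
          exact pow_le_pow_of_le_one (norm_nonneg q) hq.le (by omega)
        calc ∑ k ∈ Finset.range K, ‖q‖^(k+1) ≤ ∑ k ∈ Finset.range K, ‖q‖^k :=
              Finset.sum_le_sum hterm
          _ ≤ ∑' k : ℕ, ‖q‖^k := Summable.sum_le_tsum _ (fun k _ => pow_nonneg (norm_nonneg q) k)
              (summable_geometric_of_lt_one (norm_nonneg q) hq)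
          _ = (1-‖q‖)⁻¹ := tsum_geometric_of_lt_one (norm_nonneg q) hq

lemma main_eq (hq : ‖q‖ < 1) : Ff q q = PP q q := by
  set C := Cf q + (1 + Cg q) with hC
  set E := Real.exp ((1-‖q‖)⁻¹) with hE
  have hCpos : 0 ≤ C := by
    have := Cf_nonneg hq; have := Cg_nonneg hq
    simp only [hC]; linarith
  have hbd : ∀ K : ℕ, ‖Ff q q - PP q q‖ ≤ (E * C * ‖q‖) * ‖q‖^K := by
    intro K
    have htK : ‖q^(K+1)‖ ≤ 1 := (qpow_le hq K).trans hq.le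
    rw [iterate_diff hq K, norm_mul]
    have h1 := prod_norm_le hq K
    have h2 : ‖Ff q (q^(K+1)) - PP q (q^(K+1))‖ ≤ ‖q^(K+1)‖ * C := diff_le hq htK
    have h3 : ‖q^(K+1)‖ * C ≤ ‖q‖^(K+1) * C := by
      rw [norm_pow]
    calc ‖∏ k ∈ Finset.range K, (-(1 + q^(k+1)))‖ * ‖Ff q (q^(K+1)) - PP q (q^(K+1))‖
        ≤ E * (‖q‖^(K+1) * C) := by
          apply mul_le_mul h1 (h2.trans h3) (norm_nonneg _) (Real.exp_pos _).le
      _ = (E * C * ‖q‖) * ‖q‖^K := by rw [pow_succ]; ring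
  have hlim : Filter.Tendsto (fun K : ℕ => (E * C * ‖q‖) * ‖q‖^K) atTop (nhds 0) := by
    simpa using (tendsto_pow_atTop_nhds_zero_of_lt_one (norm_nonneg q) hq).const_mul (E * C * ‖q‖)
  have h0 : ‖Ff q q - PP q q‖ ≤ 0 := ge_of_tendsto' hlim hbd
  have := norm_nonneg (Ff q q - PP q q)
  have hz : Ff q q - PP q q = 0 := by
    rw [← norm_eq_zero]; linarith
  exact sub_eq_zero.1 hz

/-! ### translating both sides -/

lemma two_ef (n : ℕ) : 2 * ef n + 2 * n = n * (n+1) := by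
  induction n with
  | zero => rfl
  | succ m ih =>
    have h : (m+1) * ((m+1)+1) = m * (m+1) + 2*(m+1) := by ring
    rw [ef_succ, h]; omega

lemma ef_even (k : ℕ) : ef (2*k) + 2*k = k*(2*k+1) := by
  have h := two_ef (2*k)
  apply Nat.eq_of_mul_eq_mul_left (show 0 < 2 by norm_num)
  calc 2*(ef (2*k) + 2*k) = 2*ef (2*k) + 2*(2*k) := by ring
    _ = (2*k)*(2*k+1) := h
    _ = 2*(k*(2*k+1)) := by ring

lemma eg_add (j : ℕ) : eg j + j = j * (3*j+1) / 2 := by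
  have h : 2 * eg j + j = 3 * j * j := by
    induction j with
    | zero => rfl
    | succ m ih =>
      have : 3 * (m+1) * (m+1) = 3*m*m + 6*m+3 := by ring
      rw [eg_succ]; omega
  have h2 : j * (3*j+1) = 2 * (eg j + j) := by
    have : j * (3*j+1) = 3*j*j + j := by ring
    omega
  rw [h2, Nat.mul_div_cancel_left _ (by norm_num)]

lemma lhs_eq (hq : ‖q‖ < 1) :
    ∑' n : ℕ, q ^ (n * (2 * n + 1)) / qPoch (-q) q (2 * n + 1) = Ff q q := by
  have hs := summable_fa (t := q) hq hq.le
  have hse : Summable (fun k => fa q q (2*k)) :=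
    hs.comp_injective (fun a b h => by omega)
  have hso : Summable (fun k => fa q q (2*k+1)) :=
    hs.comp_injective (fun a b h => by omega)
  rw [Ff, ← tsum_even_add_odd hse hso, ← Summable.tsum_add hse hso]
  apply tsum_congr
  intro k
  have h1 := Pq_ne_zero hq (2*k)
  have h2 := one_add_qpow_ne_zero hq (2*k)
  have hP : Pq q (2*k+1) = Pq q (2*k) * (1 + q^(2*k+1)) := Pq_succ (2*k)
  have hPq : qPoch (-q) q (2*k+1) = Pq q (2*k+1) := rfl
  have hefo : ef (2*k+1) = ef (2*k) + 2*k := ef_succ (2*k)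
  have hsgn_e : ((-1:ℂ))^(2*k) = 1 := by
    rw [pow_mul]; norm_num
  have hsgn_o : ((-1:ℂ))^(2*k+1) = -1 := by
    rw [pow_succ, hsgn_e]; ring
  have hqe : (q:ℂ)^(2*k) * q^(ef (2*k)) = q^(k*(2*k+1)) := by
    rw [← pow_add, ← ef_even k]
    ring_nf
  rw [hPq, hP, fa, fa, hefo, hsgn_e, hsgn_o, hP]
  field_simp
  rw [← hqe]
  ring

lemma rhs_eq (hq : ‖q‖ < 1) :
    ∑' j : ℕ, q ^ (j * (3 * j + 1) / 2) * (1 - q ^ (2 * j + 1)) = PP q q := by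
  rw [PP]
  apply tsum_congr
  intro j
  have h1 := Pq_ne_zero hq j
  have hPq : qPoch (-q) q j = Pq q j := rfl
  have he : j * (3*j+1) / 2 = eg j + j := (eg_add j).symm
  rw [he, pu, hPq]
  field_simp
  ring

theorem final (hq : ‖q‖ < 1) :
    ∑' n : ℕ, q ^ (n * (2 * n + 1)) / qPoch (-q) q (2 * n + 1)
      = ∑' j : ℕ, q ^ (j * (3 * j + 1) / 2) * (1 - q ^ (2 * j + 1)) := by
  rw [lhs_eq hq, rhs_eq hq, main_eq hq]

end RLN

theorem stmt_10 (q : ℂ) (hq : ‖q‖ < 1) :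
    ∑' n : ℕ, q ^ (n * (2 * n + 1)) / qPoch (-q) q (2 * n + 1)
      = ∑' j : ℕ, q ^ (j * (3 * j + 1) / 2) * (1 - q ^ (2 * j + 1)) := by
  exact RLN.final hq
end

section
/- For every nonnegative integer n and commuting variables a, b, the product (a(1-b)q;q)_n / (aq;q)_n equals the sum over all partitions π whose largest part is at most n of a^{ν(π)} b^{ν_d(π)} q^{|π|}, where ν(π) is the number of parts of π, ν_d(π) is the number of distinct part sizes of π, and |π| is the sum of the parts, as an identity of formal power series in q (with coefficients polynomial in a, b). -/
open scoped Classical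

noncomputable abbrev K12 := FractionRing (MvPolynomial (Fin 2) ℚ)

namespace Alladi12

noncomputable def aa : K12 := algebraMap (MvPolynomial (Fin 2) ℚ) K12 (MvPolynomial.X 0)
noncomputable def bb : K12 := algebraMap (MvPolynomial (Fin 2) ℚ) K12 (MvPolynomial.X 1)

noncomputable def w {m : ℕ} (π : Nat.Partition m) : K12 :=
  aa ^ (Multiset.card π.parts) * bb ^ π.parts.toFinset.card

noncomputable def S (n m : ℕ) : K12 :=
  ∑ π ∈ Finset.univ.filter (fun π : Nat.Partition m => ∀ p ∈ π.parts, p ≤ n), w π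

noncomputable def B (q m : ℕ) : K12 :=
  ∑ π ∈ Finset.univ.filter
      (fun π : Nat.Partition m => (∀ p ∈ π.parts, p ≤ q) ∧ q ∈ π.parts), w π

lemma split (n m : ℕ) : S (n + 1) m = S n m + B (n + 1) m := by
  have key := Finset.sum_filter_add_sum_filter_not
      (Finset.univ.filter (fun π : Nat.Partition m => ∀ p ∈ π.parts, p ≤ n + 1))
      (fun π => (n + 1) ∈ π.parts) w
  have e2 : (Finset.univ.filter
        (fun π : Nat.Partition m => ∀ p ∈ π.parts, p ≤ n + 1)).filter
        (fun π => ¬ (n + 1) ∈ π.parts)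
      = Finset.univ.filter (fun π : Nat.Partition m => ∀ p ∈ π.parts, p ≤ n) := by
    rw [Finset.filter_filter]
    apply Finset.filter_congr
    intro π _
    constructor
    · intro h p hp
      have h1 := h.1 p hp
      have h2 : p ≠ n + 1 := fun he => h.2 (he ▸ hp)
      omega
    · intro h
      refine ⟨fun p hp => (h p hp).trans (by omega), fun hc => by have := h _ hc; omega⟩
  rw [S, S, B, ← key, e2, add_comm, Finset.filter_filter]

lemma Bzero (q m : ℕ) (h : m < q) : B q m = 0 := by
  rw [B, Finset.filter_false_of_mem, Finset.sum_empty]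
  intro π _ hc
  have := Multiset.le_sum_of_mem hc.2
  rw [π.parts_sum] at this
  omega

/-- remove one copy of q -/
noncomputable def remo (q m : ℕ) (π : Nat.Partition m) (hq : q ∈ π.parts) :
    Nat.Partition (m - q) where
  parts := π.parts.erase q
  parts_pos := fun hi => π.parts_pos (Multiset.mem_of_mem_erase hi)
  parts_sum := by
    have h := congrArg Multiset.sum (Multiset.cons_erase hq)
    rw [Multiset.sum_cons, π.parts_sum] at h
    have hqm : q ≤ m := by
      have := Multiset.le_sum_of_mem hq
      rw [π.parts_sum] at this; exact this
    omega

/-- add one copy of q -/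
noncomputable def addp (q m : ℕ) (π : Nat.Partition (m - q)) (hq : q ≤ m) (h0 : 0 < q) :
    Nat.Partition m where
  parts := q ::ₘ π.parts
  parts_pos := by
    intro i hi
    rcases Multiset.mem_cons.1 hi with rfl | hi
    · exact h0
    · exact π.parts_pos hi
  parts_sum := by rw [Multiset.sum_cons, π.parts_sum]; omega

lemma w_remo (q m : ℕ) (π : Nat.Partition m) (hq : q ∈ π.parts) :
    w π = aa * w (remo q m π hq) *
      (if q ∈ (remo q m π hq).parts then 1 else bb) := by
  have hparts : (remo q m π hq).parts = π.parts.erase q := rfl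
  have hc : Multiset.card π.parts = Multiset.card (π.parts.erase q) + 1 := by
    rw [Multiset.card_erase_of_mem hq]
    have : 0 < Multiset.card π.parts := Multiset.card_pos_iff_exists_mem.2 ⟨q, hq⟩
    exact (Nat.succ_pred_eq_of_pos this).symm
  rw [w, w, hparts, hc]
  by_cases h2 : q ∈ π.parts.erase q
  · rw [if_pos h2]
    have hts : π.parts.toFinset = (π.parts.erase q).toFinset := by
      ext x
      by_cases hx : x = q
      · subst hx; simp [hq, h2]
      · simp [Multiset.mem_erase_of_ne hx]
    rw [hts]
    ring
  · rw [if_neg h2]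
    have hts : (π.parts.erase q).toFinset = π.parts.toFinset.erase q := by
      ext x
      by_cases hx : x = q
      · subst hx; simp [h2]
      · simp [Multiset.mem_erase_of_ne hx, hx]
    have hqt : q ∈ π.parts.toFinset := Multiset.mem_toFinset.2 hq
    have hcard : π.parts.toFinset.card = (π.parts.erase q).toFinset.card + 1 := by
      rw [hts, Finset.card_erase_of_mem hqt]
      have : 0 < π.parts.toFinset.card := Finset.card_pos.2 ⟨q, hqt⟩
      omega
    rw [hcard]
    ring

set_option maxHeartbeats 1000000 in
lemma bij (n m : ℕ) (h : n + 1 ≤ m) :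
    B (n + 1) m = aa * B (n + 1) (m - (n + 1)) + aa * bb * S n (m - (n + 1)) := by
  set q := n + 1 with hqdef
  have h0 : 0 < q := Nat.succ_pos n
  have step1 : B q m =
      ∑ π' ∈ Finset.univ.filter
          (fun π' : Nat.Partition (m - q) => ∀ p ∈ π'.parts, p ≤ q),
        aa * w π' * (if q ∈ π'.parts then 1 else bb) := by
    rw [B]
    refine Finset.sum_bij'
      (fun π hπ => remo q m π ((Finset.mem_filter.1 hπ).2.2))
      (fun π' hπ' => addp q m π' h (by omega)) ?_ ?_ ?_ ?_ ?_
    · intro π hπ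
      simp only [Finset.mem_filter, Finset.mem_univ, true_and] at hπ ⊢
      intro p hp
      exact hπ.1 p (Multiset.mem_of_mem_erase hp)
    · intro π' hπ'
      simp only [Finset.mem_filter, Finset.mem_univ, true_and] at hπ' ⊢
      constructor
      · intro p hp
        rcases Multiset.mem_cons.1 hp with rfl | hp
        · exact le_refl _
        · exact hπ' p hp
      · exact Multiset.mem_cons_self _ _
    · intro π hπ
      apply Nat.Partition.ext
      exact Multiset.cons_erase (Finset.mem_filter.1 hπ).2.2
    · intro π' hπ'
      apply Nat.Partition.ext
      exact Multiset.erase_cons_head _ _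
    · intro π hπ
      exact w_remo q m π (Finset.mem_filter.1 hπ).2.2
  rw [step1, ← Finset.sum_filter_add_sum_filter_not
      (Finset.univ.filter (fun π' : Nat.Partition (m - q) => ∀ p ∈ π'.parts, p ≤ q))
      (fun π' => q ∈ π'.parts)]
  congr 1
  · rw [B, Finset.filter_filter, Finset.mul_sum]
    apply Finset.sum_congr rfl
    intro π hπ
    rw [if_pos (Finset.mem_filter.1 hπ).2.2, mul_one]
  · rw [S, Finset.filter_filter, Finset.mul_sum]
    have hset : (Finset.univ.filter
          (fun π : Nat.Partition (m - q) => (∀ p ∈ π.parts, p ≤ q) ∧ ¬ q ∈ π.parts))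
        = Finset.univ.filter (fun π : Nat.Partition (m - q) => ∀ p ∈ π.parts, p ≤ n) := by
      apply Finset.filter_congr
      intro π _
      constructor
      · intro hh p hp
        have h1 := hh.1 p hp
        have h2 : p ≠ q := fun he => hh.2 (he ▸ hp)
        omega
      · intro hh
        refine ⟨fun p hp => (hh p hp).trans (by omega), fun hc => by have := hh _ hc; omega⟩
    rw [hset]
    apply Finset.sum_congr rfl
    intro π hπ
    have : ¬ q ∈ π.parts := by
      intro hc
      have := (Finset.mem_filter.1 hπ).2 _ hc
      omega
    rw [if_neg this]
    ring

lemma coeff_aux (f : ℕ → K12) (c : K12) (q m : ℕ) :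
    PowerSeries.coeff (R := K12) m
        (PowerSeries.mk f * (1 - PowerSeries.C (R := K12) c * PowerSeries.X ^ q))
      = f m - c * (if q ≤ m then f (m - q) else 0) := by
  have hcomm : PowerSeries.mk f * (PowerSeries.C (R := K12) c * PowerSeries.X ^ q)
      = PowerSeries.C (R := K12) c * (PowerSeries.mk f * PowerSeries.X ^ q) := by ring
  rw [mul_sub, mul_one, map_sub, PowerSeries.coeff_mk, hcomm, PowerSeries.coeff_C_mul,
    PowerSeries.coeff_mul_X_pow']
  split <;> simp [PowerSeries.coeff_mk]

lemma small (n m : ℕ) (h : m ≤ n) : S (n + 1) m = S n m := by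
  rw [S, S]
  congr 1
  apply Finset.filter_congr
  intro π _
  have key : ∀ p ∈ π.parts, p ≤ m := by
    intro p hp
    have := Multiset.le_sum_of_mem hp
    rw [π.parts_sum] at this; exact this
  constructor
  · intro _ p hp; have := key p hp; omega
  · intro _ p hp; have := key p hp; omega

lemma series_rec (n : ℕ) :
    PowerSeries.mk (S (n + 1)) * (1 - PowerSeries.C (R := K12) aa * PowerSeries.X ^ (n + 1))
      = PowerSeries.mk (S n) *
        (1 - PowerSeries.C (R := K12) (aa * (1 - bb)) * PowerSeries.X ^ (n + 1)) := by
  ext m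
  rw [coeff_aux, coeff_aux]
  by_cases h : n + 1 ≤ m
  · rw [if_pos h, if_pos h]
    have h1 := split n m
    have h2 := bij n m h
    have h3 := split n (m - (n + 1))
    linear_combination h1 + h2 - aa * h3
  · rw [if_neg h, if_neg h, mul_zero, mul_zero, sub_zero, sub_zero]
    exact small n m (by omega)

lemma base : PowerSeries.mk (S 0) = 1 := by
  ext m
  rw [PowerSeries.coeff_mk, PowerSeries.coeff_one]
  rcases Nat.eq_zero_or_pos m with rfl | hm
  · rw [if_pos rfl, S]
    have huniv : (Finset.univ : Finset (Nat.Partition 0)) = {default} :=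
      Finset.univ_unique
    rw [huniv, Finset.filter_singleton, if_pos (by simp)]
    rw [Finset.sum_singleton, w]
    simp
  · rw [if_neg (by omega), S, Finset.filter_false_of_mem, Finset.sum_empty]
    intro π _ hc
    have hz : π.parts = 0 := by
      apply Multiset.eq_zero_of_forall_notMem
      intro x hx
      have h1 := π.parts_pos hx
      have h2 := hc x hx
      omega
    have hs := π.parts_sum
    rw [hz] at hs
    simp at hs
    omega

lemma main (n : ℕ) :
    (∏ i ∈ Finset.range n,
        (1 - PowerSeries.C (R := K12) (aa * (1 - bb)) * PowerSeries.X ^ (i + 1)))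
      = PowerSeries.mk (S n) *
        ∏ i ∈ Finset.range n,
          (1 - PowerSeries.C (R := K12) aa * PowerSeries.X ^ (i + 1)) := by
  induction n with
  | zero => simp [base]
  | succ n ih =>
    rw [Finset.prod_range_succ, Finset.prod_range_succ, ih]
    have h := series_rec n
    linear_combination (-(∏ i ∈ Finset.range n,
        (1 - PowerSeries.C (R := K12) aa * PowerSeries.X ^ (i + 1)))) * h

lemma den_unit (n : ℕ) :
    PowerSeries.constantCoeff (R := K12)
      (∏ i ∈ Finset.range n,
        (1 - PowerSeries.C (R := K12) aa * PowerSeries.X ^ (i + 1))) ≠ 0 := by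
  rw [map_prod]
  have : ∀ i ∈ Finset.range n,
      PowerSeries.constantCoeff (R := K12)
        (1 - PowerSeries.C (R := K12) aa * PowerSeries.X ^ (i + 1)) = 1 := by
    intro i _
    simp [PowerSeries.constantCoeff_X]
  rw [Finset.prod_congr rfl this]
  simp

end Alladi12

theorem stmt_12 (n : ℕ) :
    (∏ i ∈ Finset.range n,
        (1 - PowerSeries.C (R := K12)
            ((algebraMap (MvPolynomial (Fin 2) ℚ) K12 (MvPolynomial.X 0)) *
              (1 - algebraMap (MvPolynomial (Fin 2) ℚ) K12 (MvPolynomial.X 1)))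
          * PowerSeries.X ^ (i + 1))) *
      (∏ i ∈ Finset.range n,
        (1 - PowerSeries.C (R := K12)
            (algebraMap (MvPolynomial (Fin 2) ℚ) K12 (MvPolynomial.X 0))
          * PowerSeries.X ^ (i + 1)))⁻¹
    = PowerSeries.mk (fun m =>
        ∑ π ∈ Finset.univ.filter (fun π : Nat.Partition m => ∀ p ∈ π.parts, p ≤ n),
          (algebraMap (MvPolynomial (Fin 2) ℚ) K12 (MvPolynomial.X 0)) ^ (Multiset.card π.parts)
            * (algebraMap (MvPolynomial (Fin 2) ℚ) K12 (MvPolynomial.X 1)) ^ π.parts.toFinset.card) := by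
  have hmk : (PowerSeries.mk (fun m =>
        ∑ π ∈ Finset.univ.filter (fun π : Nat.Partition m => ∀ p ∈ π.parts, p ≤ n),
          (algebraMap (MvPolynomial (Fin 2) ℚ) K12 (MvPolynomial.X 0)) ^ (Multiset.card π.parts)
            * (algebraMap (MvPolynomial (Fin 2) ℚ) K12 (MvPolynomial.X 1)) ^ π.parts.toFinset.card))
      = PowerSeries.mk (Alladi12.S n) := by
    rfl
  rw [hmk]
  have hmain := Alladi12.main n
  rw [show (algebraMap (MvPolynomial (Fin 2) ℚ) K12 (MvPolynomial.X 0)) = Alladi12.aa from rfl,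
    show (algebraMap (MvPolynomial (Fin 2) ℚ) K12 (MvPolynomial.X 1)) = Alladi12.bb from rfl]
  rw [hmain, mul_assoc,
    PowerSeries.mul_inv_cancel _ (Alladi12.den_unit n), mul_one]
end

section
/- For every nonnegative integer n, as formal power series in q, (-q;q)_n / (q;q)_n equals the sum over all partitions π with largest part at most n of 2^{ν_d(π)} q^{|π|}, where ν_d(π) is the number of distinct part sizes of π. -/
open scoped Classical

open Finset PowerSeries

noncomputable def fcoef (n m : ℕ) : ℚ :=
  ∑ π ∈ Finset.univ.filter (fun π : Nat.Partition m => ∀ p ∈ π.parts, p ≤ n),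
    (2 : ℚ) ^ π.parts.toFinset.card

lemma fcoef_zero (m : ℕ) : fcoef 0 m = if m = 0 then 1 else 0 := by
  rcases Nat.eq_zero_or_pos m with rfl | hm
  · simp [fcoef, Finset.filter_true_of_mem]
  · rw [if_neg hm.ne']
    apply Finset.sum_eq_zero
    intro π hπ
    simp only [Finset.mem_filter] at hπ
    exfalso
    have : π.parts ≠ 0 := by
      intro h
      have h2 := π.parts_sum
      rw [h] at h2
      simp at h2
      omega
    obtain ⟨p, hp⟩ := Multiset.exists_mem_of_ne_zero this
    exact absurd (hπ.2 p hp) (by have := π.parts_pos hp; omega)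

def erasePart {m : ℕ} (k : ℕ) (π : Nat.Partition m) (hπ : k ∈ π.parts) :
    Nat.Partition (m - k) where
  parts := π.parts.erase k
  parts_pos hp := π.parts_pos (Multiset.mem_of_mem_erase hp)
  parts_sum := by
    have h := Multiset.cons_erase hπ
    have h2 := congrArg Multiset.sum h
    rw [Multiset.sum_cons, π.parts_sum] at h2
    omega

def consPart {m : ℕ} (k : ℕ) (hk : 0 < k) (hkm : k ≤ m) (σ : Nat.Partition (m - k)) :
    Nat.Partition m where
  parts := k ::ₘ σ.parts
  parts_pos hp := by
    rcases Multiset.mem_cons.1 hp with rfl | h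
    · exact hk
    · exact σ.parts_pos h
  parts_sum := by
    have := σ.parts_sum
    simp only [Multiset.sum_cons, this]
    omega

set_option maxHeartbeats 2000000 in
lemma fcoef_succ (n m : ℕ) :
    fcoef (n+1) m = fcoef n m +
      (if n+1 ≤ m then fcoef n (m - (n+1)) + fcoef (n+1) (m - (n+1)) else 0) := by
  set k := n + 1 with hk
  have hsplit : ∀ (M : ℕ),
      (Finset.univ.filter (fun π : Nat.Partition M => ∀ p ∈ π.parts, p ≤ n))
      = (Finset.univ.filter (fun π : Nat.Partition M => ∀ p ∈ π.parts, p ≤ k)).filter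
          (fun π => k ∉ π.parts) := by
    intro M
    rw [Finset.filter_filter]
    apply Finset.filter_congr
    intro π _
    constructor
    · intro h
      refine ⟨fun p hp => le_trans (h p hp) (by omega), fun hmem => ?_⟩
      have := h k hmem; omega
    · rintro ⟨h1, h2⟩ p hp
      have := h1 p hp
      have hne : p ≠ k := fun h => h2 (h ▸ hp)
      omega
  rw [fcoef, ← Finset.sum_filter_add_sum_filter_not
    (Finset.univ.filter (fun π : Nat.Partition m => ∀ p ∈ π.parts, p ≤ k))
    (fun π : Nat.Partition m => k ∉ π.parts)]
  congr 1
  · rw [fcoef, hsplit m]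
  · by_cases hkm : k ≤ m
    · rw [if_pos hkm]
      have hrhs : fcoef n (m - k) + fcoef (n+1) (m - k) =
          ∑ σ ∈ Finset.univ.filter (fun σ : Nat.Partition (m - k) => ∀ p ∈ σ.parts, p ≤ k),
            (if k ∈ σ.parts then (1:ℚ) else 2) * 2 ^ σ.parts.toFinset.card := by
        rw [fcoef, fcoef, hsplit (m - k), Finset.sum_filter, ← Finset.sum_add_distrib]
        apply Finset.sum_congr rfl
        intro σ _
        by_cases h : k ∈ σ.parts <;> simp [h] <;> ring
      rw [hrhs]
      have hkpos : 0 < k := by omega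
      refine Finset.sum_bij'
        (fun π hπ => erasePart k π (by
          simp only [Finset.mem_filter, not_not] at hπ; exact hπ.2))
        (fun σ _ => consPart k hkpos hkm σ) ?_ ?_ ?_ ?_ ?_
      · intro π hπ
        simp only [Finset.mem_filter, not_not] at hπ ⊢
        refine ⟨Finset.mem_univ _, fun p hp => hπ.1.2 p (Multiset.mem_of_mem_erase hp)⟩
      · intro σ hσ
        simp only [Finset.mem_filter, not_not] at hσ ⊢
        refine ⟨⟨Finset.mem_univ _, fun p hp => ?_⟩, ?_⟩
        · rcases Multiset.mem_cons.1 hp with rfl | h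
          · exact le_refl _
          · exact hσ.2 p h
        · exact Multiset.mem_cons_self _ _
      · intro π hπ
        simp only [Finset.mem_filter, not_not] at hπ
        apply Nat.Partition.ext
        simp only [consPart, erasePart]
        exact Multiset.cons_erase hπ.2
      · intro σ hσ
        apply Nat.Partition.ext
        simp only [consPart, erasePart]
        exact Multiset.erase_cons_head k σ.parts
      · intro π hπ
        simp only [Finset.mem_filter, not_not] at hπ
        have hmem := hπ.2
        simp only [erasePart]
        have hparts : π.parts.toFinset = insert k (π.parts.erase k).toFinset := by
          conv_lhs => rw [← Multiset.cons_erase hmem]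
          exact Multiset.toFinset_cons _ _
        by_cases h : k ∈ π.parts.erase k
        · simp only [h, ↓reduceIte]
          rw [hparts, Finset.insert_eq_self.2 (Multiset.mem_toFinset.2 h), one_mul]
        · simp only [h, ↓reduceIte]
          rw [hparts, Finset.card_insert_of_notMem (fun hc => h (Multiset.mem_toFinset.1 hc))]
          rw [pow_succ]
          ring
    · rw [if_neg hkm]
      apply Finset.sum_eq_zero
      intro π hπ
      simp only [Finset.mem_filter, not_not] at hπ
      exfalso
      have : k ≤ π.parts.sum := Multiset.le_sum_of_mem hπ.2
      rw [π.parts_sum] at this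
      omega

lemma mk_fcoef_zero : PowerSeries.mk (fcoef 0) = (1 : PowerSeries ℚ) := by
  ext m
  simp [PowerSeries.coeff_mk, fcoef_zero, PowerSeries.coeff_one]

lemma key (n : ℕ) :
    PowerSeries.mk (fcoef n) * (1 + (PowerSeries.X : PowerSeries ℚ) ^ (n+1))
    = PowerSeries.mk (fcoef (n+1)) * (1 - PowerSeries.X ^ (n+1)) := by
  ext m
  simp only [mul_add, mul_sub, mul_one, map_add, map_sub,
    PowerSeries.coeff_mul_X_pow', PowerSeries.coeff_mk]
  rw [fcoef_succ n m]
  split_ifs with h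
  · ring
  · ring

lemma prod_eq (n : ℕ) :
    (∏ i ∈ Finset.range n, (1 + (PowerSeries.X : PowerSeries ℚ) ^ (i + 1)))
    = PowerSeries.mk (fcoef n) *
      (∏ i ∈ Finset.range n, (1 - (PowerSeries.X : PowerSeries ℚ) ^ (i + 1))) := by
  induction n with
  | zero => simp [mk_fcoef_zero]
  | succ n ih =>
    rw [Finset.prod_range_succ, Finset.prod_range_succ, ih]
    calc PowerSeries.mk (fcoef n) *
          (∏ i ∈ Finset.range n, (1 - (PowerSeries.X : PowerSeries ℚ) ^ (i + 1))) *
          (1 + PowerSeries.X ^ (n + 1))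
        = PowerSeries.mk (fcoef n) * (1 + PowerSeries.X ^ (n + 1)) *
          (∏ i ∈ Finset.range n, (1 - (PowerSeries.X : PowerSeries ℚ) ^ (i + 1))) := by ring
      _ = PowerSeries.mk (fcoef (n+1)) * (1 - PowerSeries.X ^ (n+1)) *
          (∏ i ∈ Finset.range n, (1 - (PowerSeries.X : PowerSeries ℚ) ^ (i + 1))) := by
            rw [key]
      _ = _ := by ring

theorem stmt_13 (n : ℕ) :
    (∏ i ∈ Finset.range n, (1 + (PowerSeries.X : PowerSeries ℚ) ^ (i + 1))) *
      (∏ i ∈ Finset.range n, (1 - (PowerSeries.X : PowerSeries ℚ) ^ (i + 1)))⁻¹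
    = PowerSeries.mk (fun m =>
        ∑ π ∈ Finset.univ.filter (fun π : Nat.Partition m => ∀ p ∈ π.parts, p ≤ n),
          (2 : ℚ) ^ π.parts.toFinset.card) := by
  have hB : PowerSeries.constantCoeff
      (∏ i ∈ Finset.range n, (1 - (PowerSeries.X : PowerSeries ℚ) ^ (i + 1))) ≠ 0 := by
    rw [map_prod]
    simp
  have : PowerSeries.mk (fun m =>
        ∑ π ∈ Finset.univ.filter (fun π : Nat.Partition m => ∀ p ∈ π.parts, p ≤ n),
          (2 : ℚ) ^ π.parts.toFinset.card) = PowerSeries.mk (fcoef n) := rfl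
  rw [this, eq_comm, PowerSeries.eq_mul_inv_iff_mul_eq hB]
  exact (prod_eq n).symm
end
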